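/- arXiv:1708.06691 — 4 statements merged into one kernel-verified Lean document; each statement's English description precedes it below -/
import Mathlib

section
/- A digraph D is in-semicomplete if and only if for every vertex v and every pair of internally vertex-disjoint paths P and Q both ending at v, there exists a path R with vertex set V(P) ∪ V(Q) also ending at v. -/
open scoped Classical

namespace DigraphPaper

variable {V : Type*} [Fintype V] [DecidableEq V]

/-- Vertices `u` and `v` are adjacent in the digraph with arc relation `A`. -/
def DAdj (A : V → V → Prop) (u v : V) : Prop := A u v ∨ A v u

/-- A set of vertices is stable if its vertices are pairwise nonadjacent. -/
def DStable (A : V → V → Prop) (S : Set V) : Prop :=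
  ∀ u ∈ S, ∀ v ∈ S, u ≠ v → ¬ DAdj A u v

/-- The in-neighborhood of every vertex induces a semicomplete digraph. -/
def InSemicomplete (A : V → V → Prop) : Prop :=
  ∀ v u w : V, A u v → A w v → u ≠ w → DAdj A u w

/-- The out-neighborhood of every vertex induces a semicomplete digraph. -/
def OutSemicomplete (A : V → V → Prop) : Prop :=
  ∀ v u w : V, A v u → A v w → u ≠ w → DAdj A u w

/-- A path: a nonempty list of distinct vertices with consecutive arcs. -/
def IsPath (A : V → V → Prop) (p : List V) : Prop :=
  p ≠ [] ∧ p.Nodup ∧ p.Chain' A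

/-- A collection of pairwise vertex-disjoint lists. -/
def PDisjoint (P : Finset (List V)) : Prop :=
  ∀ p ∈ P, ∀ q ∈ P, p ≠ q → ∀ x : V, x ∈ p → x ∉ q

/-- A path partition: vertex-disjoint paths covering all vertices. -/
def IsPathPartition (A : V → V → Prop) (P : Finset (List V)) : Prop :=
  (∀ p ∈ P, IsPath A p) ∧ PDisjoint P ∧ ∀ v : V, ∃ p ∈ P, v ∈ p

/-- The k-norm of a collection of paths. -/
def knorm (k : ℕ) (P : Finset (List V)) : ℕ := ∑ p ∈ P, min p.length k

/-- The set of final vertices of the paths in `P`. -/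
def pends (P : Finset (List V)) : Set V := {x | ∃ p ∈ P, p.getLast? = some x}

/-- A partial k-coloring: k pairwise disjoint stable sets. -/
def IsPartialKColoring (A : V → V → Prop) (k : ℕ) (C : Fin k → Finset V) : Prop :=
  (∀ i, DStable A (C i : Set V)) ∧ ∀ i j, i ≠ j → Disjoint (C i) (C j)

/-- Orthogonality of a partial k-coloring to a path partition:
each path meets `min |P| k` distinct color classes. -/
def OrthoPC (k : ℕ) (C : Fin k → Finset V) (P : Finset (List V)) : Prop :=
  ∀ p ∈ P, min p.length k ≤ (Finset.univ.filter fun i : Fin k => ∃ x ∈ p, x ∈ C i).card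

/-- A k-optimal path partition. -/
def KOptimal (A : V → V → Prop) (k : ℕ) (P : Finset (List V)) : Prop :=
  IsPathPartition A P ∧
    ∀ Q : Finset (List V), IsPathPartition A Q → knorm k P ≤ knorm k Q

/-- A k-pack: at most k vertex-disjoint paths. -/
def IsKPack (A : V → V → Prop) (k : ℕ) (P : Finset (List V)) : Prop :=
  P.card ≤ k ∧ (∀ p ∈ P, IsPath A p) ∧ PDisjoint P

/-- Weight of a k-pack: number of covered vertices. -/
def weight (P : Finset (List V)) : ℕ := ∑ p ∈ P, p.length

/-- The set of vertices covered by the paths of `P`. -/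
def cover (P : Finset (List V)) : Finset V := P.biUnion List.toFinset

/-- An optimal k-pack. -/
def OptimalKPack (A : V → V → Prop) (k : ℕ) (P : Finset (List V)) : Prop :=
  IsKPack A k P ∧ ∀ Q : Finset (List V), IsKPack A k Q → weight Q ≤ weight P

/-- A coloring: a partition of the vertex set into stable sets. -/
def IsColoring (A : V → V → Prop) (C : Finset (Finset V)) : Prop :=
  (∀ c ∈ C, DStable A (c : Set V)) ∧ (∀ c ∈ C, c.Nonempty) ∧
  (∀ c ∈ C, ∀ c' ∈ C, c ≠ c' → Disjoint c c') ∧ ∀ v : V, ∃ c ∈ C, v ∈ c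

/-- Orthogonality of a coloring to a k-pack:
each color class meets `min |C| k` distinct paths. -/
def OrthoCP (k : ℕ) (C : Finset (Finset V)) (P : Finset (List V)) : Prop :=
  ∀ c ∈ C, min c.card k ≤ (P.filter fun p => ∃ x ∈ c, x ∈ p).card

/-- π_k(D): minimum k-norm of a path partition. -/
noncomputable def pik (A : V → V → Prop) (k : ℕ) : ℕ :=
  sInf {n | ∃ P : Finset (List V), IsPathPartition A P ∧ knorm k P = n}

/-- α_k(D): maximum weight of a partial k-coloring. -/
noncomputable def alphak (A : V → V → Prop) (k : ℕ) : ℕ :=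
  sSup {n | ∃ C : Fin k → Finset V, IsPartialKColoring A k C ∧ ∑ i, (C i).card = n}

/-- π(D): minimum number of paths in a path partition. -/
noncomputable def piNum (A : V → V → Prop) : ℕ :=
  sInf {n | ∃ P : Finset (List V), IsPathPartition A P ∧ P.card = n}

/-- α(D): maximum size of a stable set. -/
noncomputable def alphaNum (A : V → V → Prop) : ℕ :=
  sSup {n | ∃ S : Finset V, DStable A (S : Set V) ∧ S.card = n}

/-- k-norm of a coloring. -/
def cnorm (k : ℕ) (C : Finset (Finset V)) : ℕ := ∑ c ∈ C, min c.card k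

/-- χ_k(D): minimum k-norm of a coloring. -/
noncomputable def chik (A : V → V → Prop) (k : ℕ) : ℕ :=
  sInf {n | ∃ C : Finset (Finset V), IsColoring A C ∧ cnorm k C = n}

/-- λ_k(D): maximum weight of a k-pack. -/
noncomputable def lamk (A : V → V → Prop) (k : ℕ) : ℕ :=
  sSup {n | ∃ P : Finset (List V), IsKPack A k P ∧ weight P = n}

lemma merge_aux (A : V → V → Prop) (hsemi : InSemicomplete A) :
    ∀ n : ℕ, ∀ p q : List V, p.length + q.length ≤ n →
      IsPath A p → IsPath A q → ∀ v : V, p.getLast? = some v → q.getLast? = some v →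
      (∀ x : V, x ∈ p → x ∈ q → x = v) →
      ∃ r : List V, IsPath A r ∧ r.toFinset = p.toFinset ∪ q.toFinset ∧
        r.getLast? = some v := by
  intro n
  induction n with
  | zero =>
    intro p q hlen hp _ v _ _ _
    have : p.length ≠ 0 := fun h => hp.1 (List.length_eq_zero_iff.mp h)
    omega
  | succ n ih =>
    -- the asymmetric merging step, assuming an arc from the penultimate
    -- vertex of `p` to the penultimate vertex of `q`
    have step : ∀ (p q : List V) (v : V) (p' q' : List V) (a b : V),
        p = p' ++ [v] → q = q' ++ [v] → p'.getLast? = some a →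
        q'.getLast? = some b → A a b →
        p.length + q.length ≤ n + 1 →
        IsPath A p → IsPath A q →
        (∀ x : V, x ∈ p → x ∈ q → x = v) →
        ∃ r : List V, IsPath A r ∧ r.toFinset = p.toFinset ∪ q.toFinset ∧
          r.getLast? = some v := by
      intro p q v p' q' a b hpd hqd hpa hqb hab hlen hp hq hdisj
      subst hpd hqd
      have hp'ne : p' ≠ [] := fun h => by simp [h] at hpa
      have hq'ne : q' ≠ [] := fun h => by simp [h] at hqb
      have hbq' : b ∈ q' := List.mem_of_mem_getLast? hqb
      have hap' : a ∈ p' := List.mem_of_mem_getLast? hpa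
      have hpnd := hp.2.1
      have hqnd := hq.2.1
      rw [List.nodup_append] at hpnd hqnd
      have hvp' : v ∉ p' := fun h => hpnd.2.2 v h v (by simp) rfl
      have hvq' : v ∉ q' := fun h => hqnd.2.2 v h v (by simp) rfl
      have hbv : A b v := by
        have := hq.2.2
        rw [List.Chain', List.isChain_append] at this
        exact this.2.2 b hqb v rfl
      have hbp' : b ∉ p' := by
        intro h
        have : b = v := hdisj b (by simp [h]) (by simp [hbq'])
        exact hvq' (this ▸ hbq')
      -- the two new shorter paths, both ending at b
      have hP1 : IsPath A (p' ++ [b]) := by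
        refine ⟨by simp, ?_, ?_⟩
        · rw [List.nodup_append]
          exact ⟨hpnd.1, List.nodup_singleton b, by
            intro x hx y hy; simp at hy; subst hy; rintro rfl; exact hbp' hx⟩
        · rw [List.Chain', List.isChain_append]
          refine ⟨(List.isChain_append.mp hp.2.2).1, List.isChain_singleton b, ?_⟩
          intro x hx y hy
          simp at hy; subst hy
          rw [hpa] at hx; simp at hx; subst hx; exact hab
      have hQ1 : IsPath A q' := ⟨hq'ne, hqnd.1, (List.isChain_append.mp hq.2.2).1⟩
      have hdisj1 : ∀ x : V, x ∈ p' ++ [b] → x ∈ q' → x = b := by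
        intro x hx hxq
        rcases List.mem_append.mp hx with hx | hx
        · exact absurd ((hdisj x (by simp [hx]) (by simp [hxq])) ▸ hxq) hvq'
        · simpa using hx
      have hlen1 : (p' ++ [b]).length + q'.length ≤ n := by
        simp only [List.length_append, List.length_singleton] at *
        omega
      obtain ⟨r', hr', hr'fin, hr'last⟩ := ih (p' ++ [b]) q' hlen1 hP1 hQ1 b
        (List.getLast?_concat) hqb hdisj1
      have hvr' : v ∉ r' := by
        intro h
        have h2 : v ∈ r'.toFinset := List.mem_toFinset.mpr h
        rw [hr'fin] at h2
        simp only [List.toFinset_append, Finset.mem_union, List.mem_toFinset,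
          List.mem_singleton] at h2
        rcases h2 with (h2 | h2) | h2
        · exact hvp' h2
        · exact hvq' (h2 ▸ hbq')
        · exact hvq' h2
      refine ⟨r' ++ [v], ⟨by simp, ?_, ?_⟩, ?_, List.getLast?_concat⟩
      · rw [List.nodup_append]
        refine ⟨hr'.2.1, List.nodup_singleton v, ?_⟩
        intro x hx y hy
        rw [List.mem_singleton] at hy
        subst hy
        rintro rfl
        exact hvr' hx
      · rw [List.Chain', List.isChain_append]
        refine ⟨hr'.2.2, List.isChain_singleton v, ?_⟩
        intro x hx y hy
        simp only [List.head?_cons, Option.mem_some_iff] at hy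
        subst hy
        rw [hr'last] at hx
        simp only [Option.mem_some_iff] at hx
        subst hx
        exact hbv
      · ext x
        simp only [List.toFinset_append, hr'fin, Finset.mem_union,
          List.mem_toFinset, List.mem_singleton]
        constructor
        · rintro (((h | h) | h) | h)
          · exact Or.inl (Or.inl h)
          · exact Or.inr (Or.inl (h ▸ hbq'))
          · exact Or.inr (Or.inl h)
          · exact Or.inl (Or.inr h)
        · rintro ((h | h) | h | h)
          · exact Or.inl (Or.inl (Or.inl h))
          · exact Or.inr h
          · exact Or.inl (Or.inr h)
          · exact Or.inr h
    intro p q hlen hp hq v hpv hqv hdisj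
    rcases List.eq_nil_or_concat p with rfl | ⟨p', c, rfl⟩
    · exact absurd rfl hp.1
    rcases List.eq_nil_or_concat q with rfl | ⟨q', d, rfl⟩
    · exact absurd rfl hq.1
    simp only [List.concat_eq_append] at *
    rw [List.getLast?_concat] at hpv hqv
    have hc : v = c := by have : c = v := by injection hpv
                          exact this.symm
    subst hc
    have hd : v = d := by have : d = v := by injection hqv
                          exact this.symm
    subst hd
    rcases eq_or_ne p' [] with rfl | hp'ne
    · refine ⟨q' ++ [v], hq, ?_, List.getLast?_concat⟩
      ext x; simp <;> tauto
    rcases eq_or_ne q' [] with rfl | hq'ne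
    · refine ⟨p' ++ [v], hp, ?_, List.getLast?_concat⟩
      ext x; simp <;> tauto
    set a := p'.getLast hp'ne with ha
    set b := q'.getLast hq'ne with hb
    have hpa : p'.getLast? = some a := List.getLast?_eq_getLast hp'ne
    have hqb : q'.getLast? = some b := List.getLast?_eq_getLast hq'ne
    have hap' : a ∈ p' := List.mem_of_mem_getLast? hpa
    have hbq' : b ∈ q' := List.mem_of_mem_getLast? hqb
    have hvp' : v ∉ p' := by
      have := hp.2.1; rw [List.nodup_append] at this
      exact fun h => this.2.2 v h v (by simp) rfl
    have hvq' : v ∉ q' := by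
      have := hq.2.1; rw [List.nodup_append] at this
      exact fun h => this.2.2 v h v (by simp) rfl
    have hav : A a v := by
      have := hp.2.2; rw [List.Chain', List.isChain_append] at this
      exact this.2.2 a hpa v rfl
    have hbv : A b v := by
      have := hq.2.2; rw [List.Chain', List.isChain_append] at this
      exact this.2.2 b hqb v rfl
    have hab_ne : a ≠ b := by
      intro h
      have : a = v := hdisj a (by simp [hap']) (by simp [h ▸ hbq'])
      exact hvp' (this ▸ hap')
    rcases hsemi v a b hav hbv hab_ne with h | h
    · exact step _ _ v p' q' a b rfl rfl hpa hqb h hlen hp hq hdisj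
    · obtain ⟨r, hr, hrfin, hrlast⟩ := step _ _ v q' p' b a rfl rfl hqb hpa h
        (by omega) hq hp (fun x hx hy => hdisj x hy hx)
      exact ⟨r, hr, by rw [hrfin, Finset.union_comm], hrlast⟩

/-- A digraph is in-semicomplete iff every pair of internally vertex-disjoint
paths ending at a common vertex `v` can be merged into one path ending at `v`. -/
theorem stmt0 (A : V → V → Prop) (hirr : Irreflexive A) :
    InSemicomplete A ↔
      ∀ (v : V) (p q : List V), IsPath A p → IsPath A q →
        p.getLast? = some v → q.getLast? = some v →
        (∀ x : V, x ∈ p → x ∈ q → x = v) →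
        ∃ r : List V, IsPath A r ∧ r.toFinset = p.toFinset ∪ q.toFinset ∧
          r.getLast? = some v := by
  constructor
  · intro hsemi v p q hp hq hpv hqv hdisj
    exact merge_aux A hsemi (p.length + q.length) p q le_rfl hp hq v hpv hqv hdisj
  · intro hmerge v u w huv hwv huw
    have huv' : u ≠ v := fun h => hirr v (h ▸ huv)
    have hwv' : w ≠ v := fun h => hirr v (h ▸ hwv)
    have hp : IsPath A [u, v] := ⟨by simp, by simp [huv'], List.isChain_pair.mpr huv⟩
    have hq : IsPath A [w, v] := ⟨by simp, by simp [hwv'], List.isChain_pair.mpr hwv⟩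
    have hdisj : ∀ x : V, x ∈ [u, v] → x ∈ [w, v] → x = v := by
      intro x hx hy
      simp only [List.mem_cons, List.mem_singleton, List.not_mem_nil, or_false] at hx hy
      rcases hx with rfl | rfl
      · rcases hy with h | h
        · exact absurd h huw
        · exact h
      · rfl
    obtain ⟨r, hr, hrfin, hrlast⟩ := hmerge v [u, v] [w, v] hp hq rfl rfl hdisj
    have hcard : r.toFinset.card = 3 := by
      rw [hrfin]
      have : ([u, v].toFinset ∪ [w, v].toFinset : Finset V) = {u, w, v} := by
        ext x; simp; tauto
      rw [this]
      rw [Finset.card_insert_of_notMem (by simp [huw, huv']),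
        Finset.card_insert_of_notMem (by simp [hwv'])]
      simp
    have hlen : r.length = 3 := by
      rw [← List.toFinset_card_of_nodup hr.2.1]; exact hcard
    obtain ⟨x, y, z, rfl⟩ := List.length_eq_three.mp hlen
    have hz : v = z := by
      have : z = v := by simpa using hrlast
      exact this.symm
    subst hz
    have hxy : A x y := (List.isChain_cons_cons.mp hr.2.2).1
    have hnd := hr.2.1
    have hxv : x ≠ v := by simp at hnd; tauto
    have hyv : y ≠ v := by simp at hnd; tauto
    have hxne : x ≠ y := by simp at hnd; tauto
    have hxmem : x = u ∨ x = w ∨ x = v := by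
      have hx : x ∈ List.toFinset [x, y, v] := by simp
      rw [hrfin] at hx; simp at hx; tauto
    have hymem : y = u ∨ y = w ∨ y = v := by
      have hy : y ∈ List.toFinset [x, y, v] := by simp
      rw [hrfin] at hy; simp at hy; tauto
    rcases hxmem with rfl | rfl | rfl
    · rcases hymem with rfl | rfl | rfl
      · exact absurd rfl hxne
      · exact Or.inl hxy
      · exact absurd rfl hyv
    · rcases hymem with rfl | rfl | rfl
      · exact Or.inr hxy
      · exact absurd rfl hxne
      · exact absurd rfl hyv
    · exact absurd rfl hxv


end DigraphPaper
end

section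
/- Let D be an in-semicomplete digraph, k a positive integer, and P a path partition of D. Then there exists a path partition Q of D such that either (i) |Q|_k < |P|_k and e(Q) is a proper subset of e(P), or (ii) |Q|_k = |P|_k, e(Q) ⊆ e(P), e(Q) is a stable set, and every partial k-coloring of D orthogonal to Q is also orthogonal to P. -/
open scoped Classical

namespace DigraphPaper

variable {V : Type*} [Fintype V] [DecidableEq V]

lemma mem_of_getLast?' {l : List V} {a : V} (h : l.getLast? = some a) : a ∈ l := by
  obtain ⟨h1, h2⟩ := List.mem_getLast?_eq_getLast (l := l) (x := a) h
  exact h2 ▸ List.getLast_mem h1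

lemma opt_eq {a b : V} (h : a ∈ (some b : Option V)) : a = b := by
  exact (by simpa using h : b = a).symm

lemma descend {A : V → V → Prop} (hin : InSemicomplete A) :
    ∀ (q : List V) (u z : V), q.Chain' A → u ∉ q → q.getLast? = some z → A u z →
      (∃ b, q.head? = some b ∧ A u b) ∨
      ∃ q1 a b q2, q = q1 ++ a :: b :: q2 ∧ A a u ∧ A u b := by
  intro q
  induction q using List.reverseRecOn with
  | nil => intro u z _ _ hz _; simp at hz
  | append_singleton q₀ y ih =>
    intro u z hch hu hz huz
    rw [List.getLast?_concat] at hz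
    have hyz : y = z := by injection hz
    subst hyz
    rcases List.eq_nil_or_concat q₀ with h0 | ⟨q₁, w, h0⟩
    · subst h0
      exact Or.inl ⟨y, rfl, huz⟩
    · rw [List.concat_eq_append] at h0
      subst h0
      have hchsplit := List.isChain_append.mp hch
      have hwz : A w y := by
        refine hchsplit.2.2 w ?_ y rfl
        rw [List.getLast?_concat]; exact rfl
      have huw : u ≠ w := by
        intro h; exact hu (by simp [h])
      rcases hin y u w huz hwz huw with h1 | h2
      · -- A u w, recurse on q₀ = q₁ ++ [w]
        have ihh := ih u w hchsplit.1
          (fun hmem => hu (by simp [List.mem_append] at hmem ⊢; tauto))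
          List.getLast?_concat h1
        rcases ihh with ⟨b, hb, hub⟩ | ⟨r1, a, b, r2, heq, hau, hub⟩
        · left
          refine ⟨b, ?_, hub⟩
          rw [List.head?_append_of_ne_nil _ (by simp), hb]
        · right
          exact ⟨r1, a, b, r2 ++ [y], by rw [heq]; simp, hau, hub⟩
      · -- A w u : split at w,y
        right
        exact ⟨q₁, w, y, [], by simp, h2, huz⟩

lemma mergeAux {A : V → V → Prop} (hin : InSemicomplete A) :
    ∀ n : ℕ, ∀ p q : List V, p.length + q.length ≤ n →
      IsPath A p → IsPath A q → (∀ x ∈ p, x ∉ q) →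
      ∀ u v, p.getLast? = some u → q.getLast? = some v → A u v →
      ∃ r, IsPath A r ∧ r.length = p.length + q.length ∧
        (∀ x, x ∈ r ↔ x ∈ p ∨ x ∈ q) ∧
        (r.getLast? = some u ∨ r.getLast? = some v) := by
  intro n
  induction n with
  | zero =>
    intro p q hlen hp _ _ u v hu _ _
    exfalso
    have h1 : p ≠ [] := hp.1
    have h2 : 0 < p.length := List.length_pos_iff.mpr h1
    omega
  | succ n ih =>
    intro p q hlen hp hq hdisj u v hu hv huv
    have hqne : q ≠ [] := hq.1
    have hunq : u ∉ q := hdisj u (mem_of_getLast?' hu)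
    rcases descend hin q u v hq.2.2 hunq hv huv with ⟨b, hb, hub⟩ | ⟨q1, a, b, q2, heq, hau, hub⟩
    · -- prepend: r = p ++ q
      refine ⟨p ++ q, ⟨by simp [hp.1], ?_, ?_⟩, by simp, by simp, Or.inr ?_⟩
      · exact List.nodup_append'.mpr ⟨hp.2.1, hq.2.1, hdisj⟩
      · refine List.isChain_append.mpr ⟨hp.2.2, hq.2.2, ?_⟩
        intro x hx y hy
        rw [hu] at hx; rw [hb] at hy
        rw [opt_eq hx, opt_eq hy]
        exact hub
      · rw [List.getLast?_append_of_ne_nil _ hqne]; exact hv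
    · -- split q = q1 ++ a :: b :: q2
      have hq' : q = (q1 ++ [a]) ++ (b :: q2) := by rw [heq]; simp
      have hchsplit := List.isChain_append.mp (hq' ▸ hq.2.2)
      have hndsplit := List.nodup_append'.mp (hq' ▸ hq.2.1)
      have hsub1 : ∀ x ∈ q1 ++ [a], x ∈ q := by
        intro x hx; rw [hq']; simp [List.mem_append] at hx ⊢; tauto
      have hsub2 : ∀ x ∈ b :: q2, x ∈ q := by
        intro x hx; rw [hq']; simp [List.mem_append] at hx ⊢; tauto
      have hpath1 : IsPath A (q1 ++ [a]) := ⟨by simp, hndsplit.1, hchsplit.1⟩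
      have hd1 : ∀ x ∈ q1 ++ [a], x ∉ p := fun x hx hxp => hdisj x hxp (hsub1 x hx)
      have hlen1 : (q1 ++ [a]).length + p.length ≤ n := by
        have h2 : q.length = q1.length + 1 + (q2.length + 1) := by rw [heq]; simp; try omega
        simp only [List.length_append, List.length_singleton] at *
        omega
      obtain ⟨r', hr'path, hr'len, hr'mem, hr'last⟩ :=
        ih (q1 ++ [a]) p hlen1 hpath1 hp hd1 a u List.getLast?_concat hu hau
      refine ⟨r' ++ (b :: q2), ⟨by simp [hr'path.1], ?_, ?_⟩, ?_, ?_, Or.inr ?_⟩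
      · refine List.nodup_append'.mpr ⟨hr'path.2.1, hndsplit.2.1, ?_⟩
        intro x hx hx2
        rcases (hr'mem x).mp hx with h | h
        · exact hndsplit.2.2 h hx2
        · exact hdisj x h (hsub2 x hx2)
      · refine List.isChain_append.mpr ⟨hr'path.2.2, hchsplit.2.1, ?_⟩
        intro x hx y hy
        rw [opt_eq hy]
        rcases hr'last with hl | hl
        · rw [hl] at hx
          rw [opt_eq hx]
          refine hchsplit.2.2 a ?_ b rfl
          rw [List.getLast?_concat]; exact rfl
        · rw [hl] at hx
          rw [opt_eq hx]
          exact hub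
      · have h2 : q.length = q1.length + (q2.length + 2) := by rw [heq]; simp; try omega
        have h3 : r'.length = q1.length + 1 + p.length := by simpa using hr'len
        simp only [List.length_append, List.length_cons]
        omega
      · intro x
        simp only [List.mem_append]
        constructor
        · rintro (h | h)
          · rcases (hr'mem x).mp h with h' | h'
            · exact Or.inr (hsub1 x h')
            · exact Or.inl h'
          · exact Or.inr (hsub2 x h)
        · rintro (h | h)
          · exact Or.inl ((hr'mem x).mpr (Or.inr h))
          · rw [hq'] at h
            rcases List.mem_append.mp h with h' | h'
            · exact Or.inl ((hr'mem x).mpr (Or.inl h'))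
            · exact Or.inr h'
      · rw [List.getLast?_append_of_ne_nil _ (by simp : (b :: q2 : List V) ≠ [])]
        rw [hq'] at hv
        rw [List.getLast?_append_of_ne_nil _ (by simp : (b :: q2 : List V) ≠ [])] at hv
        exact hv

lemma mergeD {A : V → V → Prop} (hin : InSemicomplete A) {p q : List V} {u v : V}
    (hp : IsPath A p) (hq : IsPath A q) (hdisj : ∀ x ∈ p, x ∉ q)
    (hu : p.getLast? = some u) (hv : q.getLast? = some v) (hadj : DAdj A u v) :
    ∃ r, IsPath A r ∧ r.length = p.length + q.length ∧
      (∀ x, x ∈ r ↔ x ∈ p ∨ x ∈ q) ∧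
      (r.getLast? = some u ∨ r.getLast? = some v) := by
  rcases hadj with h | h
  · exact mergeAux hin (p.length + q.length) p q le_rfl hp hq hdisj u v hu hv h
  · obtain ⟨r, h1, h2, h3, h4⟩ := mergeAux hin (q.length + p.length) q p le_rfl hq hp
      (fun x hx hx2 => hdisj x hx2 hx) v u hv hu h
    exact ⟨r, h1, by omega, fun x => by rw [h3 x]; tauto, h4.symm⟩

lemma classes_le {k : ℕ} (C : Fin k → Finset V)
    (hC : ∀ i j, i ≠ j → Disjoint (C i) (C j)) (l : List V) :
    (Finset.univ.filter fun i : Fin k => ∃ x ∈ l, x ∈ C i).card ≤ l.length := by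
  rcases (Finset.univ.filter fun i : Fin k => ∃ x ∈ l, x ∈ C i).eq_empty_or_nonempty with h | ⟨i0, hi0⟩
  · simp [h]
  · have hx0 : ∃ x ∈ l, x ∈ C i0 := (Finset.mem_filter.mp hi0).2
    obtain ⟨x0, hx0l, _⟩ := hx0
    have hcard : (Finset.univ.filter fun i : Fin k => ∃ x ∈ l, x ∈ C i).card ≤ l.toFinset.card := by
      apply Finset.card_le_card_of_injOn (fun i => if h : ∃ x ∈ l, x ∈ C i then h.choose else x0)
      · intro i hi
        have h := (Finset.mem_filter.mp (Finset.mem_coe.mp hi)).2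
        simp only [dif_pos h, List.mem_toFinset]
        exact Finset.mem_coe.mpr (List.mem_toFinset.mpr h.choose_spec.1)
      · intro i hi j hj hij
        by_contra hne
        have hi' := (Finset.mem_filter.mp (Finset.mem_coe.mp hi)).2
        have hj' := (Finset.mem_filter.mp (Finset.mem_coe.mp hj)).2
        simp only [dif_pos hi', dif_pos hj'] at hij
        have h1 := hi'.choose_spec.2
        have h2 := hj'.choose_spec.2
        rw [hij] at h1
        exact Finset.disjoint_left.mp (hC i j hne) h1 h2
    exact hcard.trans l.toFinset_card_le

theorem auxMain (A : V → V → Prop) (hin : InSemicomplete A) (k : ℕ) (hk : 0 < k) :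
    ∀ n : ℕ, ∀ P : Finset (List V), P.card ≤ n → IsPathPartition A P →
    ∃ Q : Finset (List V), IsPathPartition A Q ∧
      ((knorm k Q < knorm k P ∧ pends Q ⊂ pends P) ∨
       (knorm k Q = knorm k P ∧ pends Q ⊆ pends P ∧ DStable A (pends Q) ∧
        ∀ C : Fin k → Finset V, IsPartialKColoring A k C →
          OrthoPC k C Q → OrthoPC k C P)) := by
  intro n
  induction n with
  | zero =>
    intro P hc hP
    refine ⟨P, hP, Or.inr ⟨rfl, subset_rfl, ?_, fun C _ h => h⟩⟩
    have hPe : P = ∅ := Finset.card_eq_zero.mp (Nat.le_zero.mp hc)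
    subst hPe
    rintro x ⟨p, hp, -⟩ y - - -
    exact absurd hp (by simp)
  | succ n ih =>
    intro P hc hP
    by_cases hst : DStable A (pends P)
    · exact ⟨P, hP, Or.inr ⟨rfl, subset_rfl, hst, fun C _ h => h⟩⟩
    rw [DStable] at hst
    push_neg at hst
    obtain ⟨u, hu, v, hv, hune, hadj⟩ := hst
    obtain ⟨p, hpP, hpu⟩ := hu
    obtain ⟨q, hqP, hqv⟩ := hv
    have hpq : p ≠ q := by
      rintro rfl
      rw [hpu] at hqv
      exact hune (by injection hqv)
    have hdisj : ∀ x ∈ p, x ∉ q := hP.2.1 p hpP q hqP hpq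
    have hpp : IsPath A p := hP.1 p hpP
    have hqq : IsPath A q := hP.1 q hqP
    obtain ⟨r, hrpath, hrlen, hrmem, hrlast⟩ := mergeD hin hpp hqq hdisj hpu hqv hadj
    set P₂ := (P.erase p).erase q with hP₂
    have hqmem : q ∈ P.erase p := Finset.mem_erase.mpr ⟨fun h => hpq h.symm, hqP⟩
    have hP2sub : ∀ s ∈ P₂, s ∈ P ∧ s ≠ p ∧ s ≠ q := by
      intro s hs
      rw [hP₂, Finset.mem_erase, Finset.mem_erase] at hs
      exact ⟨hs.2.2, hs.2.1, hs.1⟩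
    have hmemP2 : ∀ s, s ∈ P → s ≠ p → s ≠ q → s ∈ P₂ := by
      intro s h1 h2 h3
      rw [hP₂, Finset.mem_erase, Finset.mem_erase]
      exact ⟨h3, h2, h1⟩
    have hup : u ∈ p := mem_of_getLast?' hpu
    have hvq : v ∈ q := mem_of_getLast?' hqv
    have hrnot : r ∉ P₂ := by
      intro h
      obtain ⟨hsP, hsp, _⟩ := hP2sub r h
      exact hP.2.1 p hpP r hsP (fun hh => hsp hh.symm) u hup ((hrmem u).mpr (Or.inl hup))
    set Q₀ := insert r P₂ with hQ₀
    have hdis_rt : ∀ t ∈ P₂, ∀ x ∈ r, x ∉ t := by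
      intro t ht x hx hxt
      obtain ⟨htP, htp, htq⟩ := hP2sub t ht
      rcases (hrmem x).mp hx with h | h
      · exact hP.2.1 p hpP t htP (fun hh => htp hh.symm) x h hxt
      · exact hP.2.1 q hqP t htP (fun hh => htq hh.symm) x h hxt
    have hQ₀part : IsPathPartition A Q₀ := by
      refine ⟨?_, ?_, ?_⟩
      · intro s hs
        rcases Finset.mem_insert.mp hs with h | h
        · exact h ▸ hrpath
        · exact hP.1 s (hP2sub s h).1
      · intro s hs t ht hst x hxs
        rcases Finset.mem_insert.mp hs with h | h <;>
          rcases Finset.mem_insert.mp ht with h' | h'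
        · exact absurd (h.trans h'.symm) hst
        · subst h; exact hdis_rt t h' x hxs
        · subst h'; intro hxr; exact hdis_rt s h x hxr hxs
        · exact hP.2.1 s (hP2sub s h).1 t (hP2sub t h').1 hst x hxs
      · intro w
        obtain ⟨s, hsP, hws⟩ := hP.2.2 w
        by_cases h1 : s = p
        · exact ⟨r, Finset.mem_insert_self r P₂, (hrmem w).mpr (Or.inl (h1 ▸ hws))⟩
        by_cases h2 : s = q
        · exact ⟨r, Finset.mem_insert_self r P₂, (hrmem w).mpr (Or.inr (h2 ▸ hws))⟩
        · exact ⟨s, Finset.mem_insert_of_mem (hmemP2 s hsP h1 h2), hws⟩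
    have hPcard2 : 2 ≤ P.card := by
      have := Finset.one_lt_card.mpr ⟨p, hpP, q, hqP, hpq⟩
      omega
    have hcard2 : P₂.card = P.card - 2 := by
      rw [hP₂, Finset.card_erase_of_mem hqmem, Finset.card_erase_of_mem hpP]
      omega
    have hQcard : Q₀.card ≤ n := by
      have := Finset.card_insert_le r P₂
      rw [hQ₀]
      omega
    have hknormP : knorm k P = min p.length k + (min q.length k + knorm k P₂) := by
      rw [knorm, ← Finset.add_sum_erase _ _ hpP, ← Finset.add_sum_erase _ _ hqmem]
      rfl
    have hknormQ : knorm k Q₀ = min r.length k + knorm k P₂ := Finset.sum_insert hrnot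
    have hsubQ : pends Q₀ ⊆ pends P := by
      rintro x ⟨s, hs, hlast⟩
      rcases Finset.mem_insert.mp hs with h | h
      · subst h
        rcases hrlast with hl | hl
        · rw [hlast] at hl
          have hxu : x = u := by injection hl
          exact ⟨p, hpP, hxu ▸ hpu⟩
        · rw [hlast] at hl
          have hxv : x = v := by injection hl
          exact ⟨q, hqP, hxv ▸ hqv⟩
      · exact ⟨s, (hP2sub s h).1, hlast⟩
    have hstrict : pends Q₀ ⊂ pends P := by
      obtain ⟨w0, hw0P, hw0not⟩ : ∃ w0, w0 ∈ pends P ∧ w0 ∉ pends Q₀ := by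
        rcases hrlast with hl | hl
        · refine ⟨v, ⟨q, hqP, hqv⟩, ?_⟩
          rintro ⟨s, hs, hsv⟩
          rcases Finset.mem_insert.mp hs with h | h
          · subst h
            rw [hsv] at hl
            have hvu : v = u := by injection hl
            exact hune hvu.symm
          · exact hP.2.1 q hqP s (hP2sub s h).1 (fun hh => (hP2sub s h).2.2 hh.symm)
              v hvq (mem_of_getLast?' hsv)
        · refine ⟨u, ⟨p, hpP, hpu⟩, ?_⟩
          rintro ⟨s, hs, hsu⟩
          rcases Finset.mem_insert.mp hs with h | h
          · subst h
            rw [hsu] at hl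
            have huv : u = v := by injection hl
            exact hune huv
          · exact hP.2.1 p hpP s (hP2sub s h).1 (fun hh => (hP2sub s h).2.1 hh.symm)
              u hup (mem_of_getLast?' hsu)
      rw [Set.ssubset_def]
      exact ⟨hsubQ, fun h => hw0not (h hw0P)⟩
    have hp1 : 1 ≤ p.length := List.length_pos_iff.mpr hpp.1
    have hq1 : 1 ≤ q.length := List.length_pos_iff.mpr hqq.1
    by_cases hk2 : p.length + q.length ≤ k
    · -- equal k-norm case
      have m1 : min p.length k = p.length := min_eq_left (by omega)
      have m2 : min q.length k = q.length := min_eq_left (by omega)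
      have m3 : min r.length k = r.length := min_eq_left (by omega)
      have heqn : knorm k Q₀ = knorm k P := by
        rw [hknormQ, hknormP, m1, m2, m3, hrlen]; omega
      have htransfer : ∀ C : Fin k → Finset V, IsPartialKColoring A k C →
          OrthoPC k C Q₀ → OrthoPC k C P := by
        intro C hC hO s hsP
        have hTr := hO r (Finset.mem_insert_self r P₂)
        have hTrsub : (Finset.univ.filter fun i : Fin k => ∃ x ∈ r, x ∈ C i) ⊆
            (Finset.univ.filter fun i : Fin k => ∃ x ∈ p, x ∈ C i) ∪
            (Finset.univ.filter fun i : Fin k => ∃ x ∈ q, x ∈ C i) := by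
          intro i hi
          simp only [Finset.mem_filter, Finset.mem_union, Finset.mem_univ, true_and] at hi ⊢
          obtain ⟨x, hx, hxC⟩ := hi
          rcases (hrmem x).mp hx with h | h
          · exact Or.inl ⟨x, h, hxC⟩
          · exact Or.inr ⟨x, h, hxC⟩
        have h1 : (Finset.univ.filter fun i : Fin k => ∃ x ∈ r, x ∈ C i).card ≤
            (Finset.univ.filter fun i : Fin k => ∃ x ∈ p, x ∈ C i).card +
            (Finset.univ.filter fun i : Fin k => ∃ x ∈ q, x ∈ C i).card :=
          (Finset.card_le_card hTrsub).trans (Finset.card_union_le _ _)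
        have h2 := classes_le C hC.2 q
        have h3 := classes_le C hC.2 p
        rw [m3, hrlen] at hTr
        by_cases hsp : s = p
        · subst hsp; rw [m1]; omega
        by_cases hsq : s = q
        · subst hsq; rw [m2]; omega
        · exact hO s (Finset.mem_insert_of_mem (hmemP2 s hsP hsp hsq))
      obtain ⟨Q, hQpart, hQcases⟩ := ih Q₀ hQcard hQ₀part
      rcases hQcases with ⟨hlt, hss⟩ | ⟨heq2, hsub2, hstab2, htr2⟩
      · exact ⟨Q, hQpart, Or.inl ⟨by omega, hss.trans_subset hsubQ⟩⟩
      · exact ⟨Q, hQpart, Or.inr ⟨by omega, hsub2.trans hsubQ, hstab2,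
          fun C hC hO => htransfer C hC (htr2 C hC hO)⟩⟩
    · -- strict decrease case
      have m3 : min r.length k = k := min_eq_right (by omega)
      have hlt0 : knorm k Q₀ < knorm k P := by
        rw [hknormQ, hknormP, m3]
        rcases min_choice p.length k with m | m <;> rcases min_choice q.length k with m' | m' <;>
          omega
      obtain ⟨Q, hQpart, hQcases⟩ := ih Q₀ hQcard hQ₀part
      rcases hQcases with ⟨hlt, hss⟩ | ⟨heq2, hsub2, _, _⟩
      · exact ⟨Q, hQpart, Or.inl ⟨by omega, hss.trans hstrict⟩⟩
      · exact ⟨Q, hQpart, Or.inl ⟨by omega, Set.ssubset_of_subset_of_ssubset hsub2 hstrict⟩⟩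

/-- Lemma 1: any path partition of an in-semicomplete digraph can be converted
into one with smaller k-norm and fewer endpoints, or one with equal k-norm,
stable endpoint set, and preserving orthogonal partial k-colorings. -/
theorem stmt2 (A : V → V → Prop) (hirr : Irreflexive A) (hin : InSemicomplete A)
    (k : ℕ) (hk : 0 < k) (P : Finset (List V)) (hP : IsPathPartition A P) :
    ∃ Q : Finset (List V), IsPathPartition A Q ∧
      ((knorm k Q < knorm k P ∧ pends Q ⊂ pends P) ∨
       (knorm k Q = knorm k P ∧ pends Q ⊆ pends P ∧ DStable A (pends Q) ∧
        ∀ C : Fin k → Finset V, IsPartialKColoring A k C →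
          OrthoPC k C Q → OrthoPC k C P)) := by
  obtain ⟨Q, h1, h2⟩ := auxMain A hin k hk P.card P le_rfl hP
  exact ⟨Q, h1, h2⟩


end DigraphPaper
end

section
/- If P is a k-optimal path partition of an out-semicomplete digraph D, then there exists a partial k-coloring of D orthogonal to P (i.e., Berge's Conjecture holds for out-semicomplete digraphs). -/
open scoped Classical

namespace DigraphPaper

variable {V : Type*} [Fintype V] [DecidableEq V]

set_option linter.unusedSectionVars false
set_option linter.unusedVariables false
set_option maxHeartbeats 1000000

def PartOn (A : V → V → Prop) (W : Finset V) (P : Finset (List V)) : Prop :=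
  (∀ p ∈ P, IsPath A p) ∧ PDisjoint P ∧ (∀ p ∈ P, ∀ x ∈ p, x ∈ W) ∧
    (∀ v ∈ W, ∃ p ∈ P, v ∈ p)

def OptOn (A : V → V → Prop) (k : ℕ) (W : Finset V) (P : Finset (List V)) : Prop :=
  PartOn A W P ∧ ∀ Q, PartOn A W Q → knorm k P ≤ knorm k Q

section Merge

variable {A : V → V → Prop}

lemma merge_lemma (hout : OutSemicomplete A) :
    ∀ (n : ℕ) (l₁ l₂ : List V) (x : V), l₁.length + l₂.length ≤ n →
    (x :: l₁).Chain' A → (x :: l₂).Chain' A → (x :: (l₁ ++ l₂)).Nodup →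
    ∃ r : List V, r.Perm (l₁ ++ l₂) ∧ (x :: r).Chain' A := by
  intro n
  induction n with
  | zero =>
    intro l₁ l₂ x hlen h₁ h₂ _
    have h1 : l₁ = [] := List.length_eq_zero_iff.mp (by omega)
    subst h1
    exact ⟨l₂, by simp, h₂⟩
  | succ n ih =>
    intro l₁ l₂ x hlen h₁ h₂ hnd
    match l₁, l₂ with
    | [], l₂ => exact ⟨l₂, by simp, h₂⟩
    | a :: t₁, [] => exact ⟨a :: t₁, by simp, h₁⟩
    | a :: t₁, b :: t₂ =>
      have hxa : A x a := (List.isChain_cons_cons.mp h₁).1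
      have hxb : A x b := (List.isChain_cons_cons.mp h₂).1
      have hnd0 : ((a :: t₁) ++ (b :: t₂)).Nodup := (List.nodup_cons.mp hnd).2
      have hab : a ≠ b := by
        intro h; subst h
        exact (List.disjoint_of_nodup_append hnd0) List.mem_cons_self
          List.mem_cons_self
      rcases hout x a b hxa hxb hab with h | h
      · -- A a b : continue from a, merging t₁ with b :: t₂
        have hch : (a :: (b :: t₂)).Chain' A :=
          List.isChain_cons_cons.mpr ⟨h, (List.isChain_cons_cons.mp h₂).2⟩
        have hnd' : (a :: (t₁ ++ b :: t₂)).Nodup := by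
          rw [← List.cons_append]; exact hnd0
        obtain ⟨r, hr, hrch⟩ := ih t₁ (b :: t₂) a (by simp at hlen ⊢; omega)
          (List.isChain_cons_cons.mp h₁).2 hch hnd'
        refine ⟨a :: r, ?_, List.isChain_cons_cons.mpr ⟨hxa, hrch⟩⟩
        rw [List.cons_append]
        exact hr.cons a
      · -- A b a : continue from b
        have hch : (b :: (a :: t₁)).Chain' A :=
          List.isChain_cons_cons.mpr ⟨h, (List.isChain_cons_cons.mp h₁).2⟩
        have hperm : ((a :: t₁) ++ (b :: t₂)).Perm (b :: ((a :: t₁) ++ t₂)) :=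
          List.perm_middle (a := b) (l₁ := a :: t₁) (l₂ := t₂)
        have hnd' : (b :: ((a :: t₁) ++ t₂)).Nodup := hperm.nodup hnd0
        obtain ⟨r, hr, hrch⟩ := ih (a :: t₁) t₂ b (by simp at hlen ⊢; omega)
          hch (List.isChain_cons_cons.mp h₂).2 hnd'
        refine ⟨b :: r, ?_, List.isChain_cons_cons.mpr ⟨hxb, hrch⟩⟩
        exact (hr.cons b).trans hperm.symm

end Merge


section Basic

variable {A : V → V → Prop} {W : Finset V} {P : Finset (List V)} {k : ℕ}

lemma partOn_singletons (A : V → V → Prop) (W : Finset V) :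
    PartOn A W (W.image fun v => [v]) := by
  refine ⟨?_, ?_, ?_, ?_⟩
  · intro p hp
    simp only [Finset.mem_image] at hp
    obtain ⟨v, _, rfl⟩ := hp
    exact ⟨by simp, by simp, by simp [List.Chain']⟩
  · intro p hp q hq hpq x hxp hxq
    simp only [Finset.mem_image] at hp hq
    obtain ⟨v, _, rfl⟩ := hp
    obtain ⟨w, _, rfl⟩ := hq
    simp only [List.mem_singleton] at hxp hxq
    subst hxp; subst hxq; exact hpq rfl
  · intro p hp x hx
    simp only [Finset.mem_image] at hp
    obtain ⟨v, hv, rfl⟩ := hp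
    simp only [List.mem_singleton] at hx
    subst hx; exact hv
  · intro v hv
    exact ⟨[v], Finset.mem_image_of_mem _ hv, by simp⟩

lemma exists_optOn (A : V → V → Prop) (k : ℕ) (W : Finset V) :
    ∃ P, OptOn A k W P := by
  have hne : {n | ∃ Q, PartOn A W Q ∧ knorm k Q = n}.Nonempty :=
    ⟨_, _, partOn_singletons A W, rfl⟩
  obtain ⟨Q, hQ, hQn⟩ := Nat.sInf_mem hne
  refine ⟨Q, hQ, fun R hR => ?_⟩
  rw [hQn]
  exact Nat.sInf_le ⟨R, hR, rfl⟩

lemma path_ne_nil (hP : PartOn A W P) {p : List V} (hp : p ∈ P) : p ≠ [] :=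
  (hP.1 p hp).1

lemma path_nodup (hP : PartOn A W P) {p : List V} (hp : p ∈ P) : p.Nodup :=
  (hP.1 p hp).2.1

lemma path_chain (hP : PartOn A W P) {p : List V} (hp : p ∈ P) : p.Chain' A :=
  (hP.1 p hp).2.2

/-- Replace two paths by one path covering their union. -/
lemma swap21 (hP : PartOn A W P) {p q m : List V} (hp : p ∈ P) (hq : q ∈ P)
    (hpq : p ≠ q) (hm : IsPath A m) (hmf : m.toFinset = p.toFinset ∪ q.toFinset) :
    PartOn A W (insert m ((P.erase p).erase q)) ∧
      knorm k (insert m ((P.erase p).erase q)) + min p.length k + min q.length k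
        = knorm k P + min m.length k := by
  have hpne := path_ne_nil hP hp
  have hmem_m : ∀ x, x ∈ m ↔ (x ∈ p ∨ x ∈ q) := by
    intro x
    rw [← List.mem_toFinset, hmf]
    simp [List.mem_toFinset]
  have hmnot : m ∉ (P.erase p).erase q := by
    intro hmm
    have hmP : m ∈ P := Finset.mem_of_mem_erase (Finset.mem_of_mem_erase hmm)
    have hmp : m ≠ p := by
      have := Finset.ne_of_mem_erase (Finset.mem_of_mem_erase hmm); exact this
    obtain ⟨x, hx⟩ := List.exists_mem_of_ne_nil p hpne
    exact hP.2.1 m hmP p hp hmp x ((hmem_m x).mpr (Or.inl hx)) hx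
  constructor
  · refine ⟨?_, ?_, ?_, ?_⟩
    · intro r hr
      rcases Finset.mem_insert.mp hr with rfl | hr
      · exact hm
      · exact hP.1 r (Finset.mem_of_mem_erase (Finset.mem_of_mem_erase hr))
    · have key : ∀ s ∈ (P.erase p).erase q, ∀ x, x ∈ m → x ∉ s := by
        intro s hs x hxm hxs
        have hsP : s ∈ P := Finset.mem_of_mem_erase (Finset.mem_of_mem_erase hs)
        have hsp : s ≠ p := Finset.ne_of_mem_erase (Finset.mem_of_mem_erase hs)
        have hsq : s ≠ q := Finset.ne_of_mem_erase hs
        rcases (hmem_m x).mp hxm with h | h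
        · exact hP.2.1 p hp s hsP (Ne.symm hsp) x h hxs
        · exact hP.2.1 q hq s hsP (Ne.symm hsq) x h hxs
      intro r hr s hs hrs x hxr hxs
      rcases Finset.mem_insert.mp hr with hr1 | hr2 <;>
        rcases Finset.mem_insert.mp hs with hs1 | hs2
      · exact hrs (hr1.trans hs1.symm)
      · exact key s hs2 x (hr1 ▸ hxr) hxs
      · exact key r hr2 x (hs1 ▸ hxs) hxr
      · exact hP.2.1 r (Finset.mem_of_mem_erase (Finset.mem_of_mem_erase hr2)) s
          (Finset.mem_of_mem_erase (Finset.mem_of_mem_erase hs2)) hrs x hxr hxs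
    · intro r hr x hx
      rcases Finset.mem_insert.mp hr with rfl | hr
      · rcases (hmem_m x).mp hx with h | h
        · exact hP.2.2.1 p hp x h
        · exact hP.2.2.1 q hq x h
      · exact hP.2.2.1 r (Finset.mem_of_mem_erase (Finset.mem_of_mem_erase hr)) x hx
    · intro v hv
      obtain ⟨r, hr, hvr⟩ := hP.2.2.2 v hv
      by_cases hrp : r = p
      · exact ⟨m, Finset.mem_insert_self _ _, (hmem_m v).mpr (Or.inl (hrp ▸ hvr))⟩
      by_cases hrq : r = q
      · exact ⟨m, Finset.mem_insert_self _ _, (hmem_m v).mpr (Or.inr (hrq ▸ hvr))⟩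
      · exact ⟨r, Finset.mem_insert_of_mem (Finset.mem_erase_of_ne_of_mem hrq
          (Finset.mem_erase_of_ne_of_mem hrp hr)), hvr⟩
  · have hqP' : q ∈ P.erase p := Finset.mem_erase_of_ne_of_mem (Ne.symm hpq) hq
    rw [knorm, Finset.sum_insert hmnot]
    have e1 : ∑ r ∈ (P.erase p).erase q, min r.length k + min q.length k
        = ∑ r ∈ P.erase p, min r.length k := Finset.sum_erase_add _ _ hqP'
    have e2 : ∑ r ∈ P.erase p, min r.length k + min p.length k
        = ∑ r ∈ P, min r.length k := Finset.sum_erase_add _ _ hp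
    unfold knorm
    omega

/-- Replace one path by another with the same vertex set. -/
lemma swap11 (hP : PartOn A W P) {q m : List V} (hq : q ∈ P)
    (hm : IsPath A m) (hmf : m.toFinset = q.toFinset) :
    PartOn A W (insert m (P.erase q)) ∧
      knorm k (insert m (P.erase q)) + min q.length k
        = knorm k P + min m.length k := by
  have hqne := path_ne_nil hP hq
  have hmem_m : ∀ x, x ∈ m ↔ x ∈ q := by
    intro x; rw [← List.mem_toFinset, hmf, List.mem_toFinset]
  by_cases hmq : m = q
  · subst hmq
    rw [Finset.insert_erase hq]
    exact ⟨hP, rfl⟩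
  have hmnot : m ∉ P.erase q := by
    intro hmm
    obtain ⟨x, hx⟩ := List.exists_mem_of_ne_nil q hqne
    exact hP.2.1 m (Finset.mem_of_mem_erase hmm) q hq hmq x ((hmem_m x).mpr hx) hx
  constructor
  · refine ⟨?_, ?_, ?_, ?_⟩
    · intro r hr
      rcases Finset.mem_insert.mp hr with rfl | hr
      · exact hm
      · exact hP.1 r (Finset.mem_of_mem_erase hr)
    · have key : ∀ s ∈ P.erase q, ∀ x, x ∈ m → x ∉ s := by
        intro s hs x hxm hxs
        exact hP.2.1 q hq s (Finset.mem_of_mem_erase hs)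
          (Ne.symm (Finset.ne_of_mem_erase hs)) x ((hmem_m x).mp hxm) hxs
      intro r hr s hs hrs x hxr hxs
      rcases Finset.mem_insert.mp hr with hr1 | hr2 <;>
        rcases Finset.mem_insert.mp hs with hs1 | hs2
      · exact hrs (hr1.trans hs1.symm)
      · exact key s hs2 x (hr1 ▸ hxr) hxs
      · exact key r hr2 x (hs1 ▸ hxs) hxr
      · exact hP.2.1 r (Finset.mem_of_mem_erase hr2) s (Finset.mem_of_mem_erase hs2) hrs x hxr hxs
    · intro r hr x hx
      rcases Finset.mem_insert.mp hr with rfl | hr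
      · exact hP.2.2.1 q hq x ((hmem_m x).mp hx)
      · exact hP.2.2.1 r (Finset.mem_of_mem_erase hr) x hx
    · intro v hv
      obtain ⟨r, hr, hvr⟩ := hP.2.2.2 v hv
      by_cases hrq : r = q
      · exact ⟨m, Finset.mem_insert_self _ _, (hmem_m v).mpr (hrq ▸ hvr)⟩
      · exact ⟨r, Finset.mem_insert_of_mem (Finset.mem_erase_of_ne_of_mem hrq hr), hvr⟩
  · rw [knorm, Finset.sum_insert hmnot]
    have e2 : ∑ r ∈ P.erase q, min r.length k + min q.length k
        = ∑ r ∈ P, min r.length k := Finset.sum_erase_add _ _ hq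
    unfold knorm
    omega

end Basic


lemma headI_mem' [Inhabited V] {p : List V} (h : p ≠ []) : p.headI ∈ p := by
  cases p with
  | nil => exact absurd rfl h
  | cons a t => simp

noncomputable def pathOf (P : Finset (List V)) (v : V) : List V :=
  if h : ∃ p ∈ P, v ∈ p then h.choose else []

noncomputable def idxOf (P : Finset (List V)) (v : V) : ℕ := (pathOf P v).idxOf v

noncomputable def predv (P : Finset (List V)) (v : V) : V :=
  (pathOf P v).getD (idxOf P v - 1) v

section Pred

variable {A : V → V → Prop} {W : Finset V} {P : Finset (List V)}

lemma path_unique (hP : PartOn A W P) {p q : List V} (hp : p ∈ P) (hq : q ∈ P)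
    {v : V} (hvp : v ∈ p) (hvq : v ∈ q) : p = q := by
  by_contra h
  exact hP.2.1 p hp q hq h v hvp hvq

lemma pathOf_spec (hP : PartOn A W P) {v : V} (hv : v ∈ W) :
    pathOf P v ∈ P ∧ v ∈ pathOf P v := by
  have h : ∃ p ∈ P, v ∈ p := hP.2.2.2 v hv
  rw [pathOf, dif_pos h]
  exact ⟨h.choose_spec.1, h.choose_spec.2⟩

lemma pathOf_eq (hP : PartOn A W P) {v : V} (hv : v ∈ W) {p : List V}
    (hp : p ∈ P) (hvp : v ∈ p) : pathOf P v = p :=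
  path_unique hP (pathOf_spec hP hv).1 hp (pathOf_spec hP hv).2 hvp

lemma idx_lt (hP : PartOn A W P) {v : V} (hv : v ∈ W) :
    idxOf P v < (pathOf P v).length :=
  List.idxOf_lt_length_iff.mpr (pathOf_spec hP hv).2

lemma get_idx (hP : PartOn A W P) {v : V} (hv : v ∈ W) :
    (pathOf P v)[idxOf P v]'(idx_lt hP hv) = v :=
  List.getElem_idxOf (idx_lt hP hv)

section WithS

variable [Inhabited V]

lemma headI_eq_get {p : List V} (h : p ≠ []) :
    p.headI = p[0]'(List.length_pos_iff.mpr h) := by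
  cases p with
  | nil => exact absurd rfl h
  | cons a t => rfl

lemma idx_pos (hP : PartOn A W P) {v : V} (hv : v ∈ W)
    (hvS : v ∉ P.image (fun p => p.headI)) : 1 ≤ idxOf P v := by
  by_contra h
  push_neg at h
  interval_cases hi : idxOf P v
  apply hvS
  have hne : pathOf P v ≠ [] := List.ne_nil_of_mem (pathOf_spec hP hv).2
  have : (pathOf P v).headI = v := by
    rw [headI_eq_get hne]
    have := get_idx hP hv
    simp only [hi] at this
    exact this
  exact Finset.mem_image.mpr ⟨pathOf P v, (pathOf_spec hP hv).1, this⟩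

lemma predv_eq_get (hP : PartOn A W P) {v : V} (hv : v ∈ W) :
    predv P v = (pathOf P v).getD (idxOf P v - 1) v := rfl

lemma predv_spec (hP : PartOn A W P) {v : V} (hv : v ∈ W)
    (hvS : v ∉ P.image (fun p => p.headI)) :
    predv P v ∈ pathOf P v ∧
      idxOf P (predv P v) = idxOf P v - 1 ∧ pathOf P (predv P v) = pathOf P v := by
  have hpos := idx_pos hP hv hvS
  have hlt := idx_lt hP hv
  have hlt' : idxOf P v - 1 < (pathOf P v).length := by omega
  have hpred : predv P v = (pathOf P v)[idxOf P v - 1] := List.getD_eq_getElem _ _ hlt'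
  have hmem : predv P v ∈ pathOf P v := hpred ▸ List.getElem_mem hlt'
  have hpathpred : pathOf P (predv P v) = pathOf P v := by
    have hpW : predv P v ∈ W := hP.2.2.1 _ (pathOf_spec hP hv).1 _ hmem
    exact pathOf_eq hP hpW (pathOf_spec hP hv).1 hmem
  refine ⟨hmem, ?_, hpathpred⟩
  rw [idxOf, hpathpred, hpred]
  exact List.Nodup.idxOf_getElem ((hP.1 _ (pathOf_spec hP hv).1).2.1) _ hlt'

lemma predv_arc (hP : PartOn A W P) {v : V} (hv : v ∈ W)
    (hvS : v ∉ P.image (fun p => p.headI)) : A (predv P v) v := by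
  have hpos := idx_pos hP hv hvS
  have hlt := idx_lt hP hv
  have hlt' : idxOf P v - 1 < (pathOf P v).length := by omega
  have hpred : predv P v = (pathOf P v)[idxOf P v - 1] := List.getD_eq_getElem _ _ hlt'
  have hchain := (hP.1 _ (pathOf_spec hP hv).1).2.2
  have := List.isChain_iff_getElem.mp hchain (idxOf P v - 1) (by omega)
  simp only [show idxOf P v - 1 + 1 = idxOf P v from by omega] at this
  rw [hpred]
  have hv' := get_idx hP hv
  rwa [hv'] at this

lemma predv_mem_W (hP : PartOn A W P) {v : V} (hv : v ∈ W)
    (hvS : v ∉ P.image (fun p => p.headI)) : predv P v ∈ W :=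
  hP.2.2.1 _ (pathOf_spec hP hv).1 _ (predv_spec hP hv hvS).1

lemma predv_inj (hP : PartOn A W P) {u v : V} (hu : u ∈ W) (hv : v ∈ W)
    (huS : u ∉ P.image (fun p => p.headI)) (hvS : v ∉ P.image (fun p => p.headI))
    (h : predv P u = predv P v) : u = v := by
  obtain ⟨hmu, hiu, hpu⟩ := predv_spec hP hu huS
  obtain ⟨hmv, hiv, hpv⟩ := predv_spec hP hv hvS
  have hpaths : pathOf P u = pathOf P v := by
    rw [← hpu, ← hpv, h]
  have hidx : idxOf P u = idxOf P v := by
    have : idxOf P (predv P u) = idxOf P (predv P v) := by rw [h]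
    have h1 := idx_pos hP hu huS
    have h2 := idx_pos hP hv hvS
    omega
  have h1 := get_idx hP hu
  have h2 := get_idx hP hv
  rw [← h1, ← h2]
  congr 1

end WithS

end Pred


section Helpers

variable {A : V → V → Prop}

lemma chain'_cons_headI [Inhabited V] {x : V} {t : List V} (hne : t ≠ [])
    (hx : A x t.headI) (ht : t.Chain' A) : (x :: t).Chain' A := by
  cases t with
  | nil => exact absurd rfl hne
  | cons a s => exact List.isChain_cons_cons.mpr ⟨hx, ht⟩

lemma drop_indexOf {l : List V} {x : V} (hx : x ∈ l) :
    l.drop (l.idxOf x) = x :: l.drop (l.idxOf x + 1) := by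
  have h : l.idxOf x < l.length := List.idxOf_lt_length_iff.mpr hx
  rw [List.drop_eq_getElem_cons h, List.getElem_idxOf h]

lemma getLast?_take {l : List V} {i : ℕ} (h1 : 1 ≤ i) (h2 : i ≤ l.length) :
    (l.take i).getLast? = some (l[i-1]'(by omega)) := by
  have hlen : (l.take i).length = i := by simp; omega
  rw [List.getLast?_eq_getElem?, hlen]
  have hlt : i - 1 < (l.take i).length := by omega
  rw [List.getElem?_eq_getElem hlt]
  congr 1
  exact List.getElem_take

lemma chain'_get {l : List V} (h : l.Chain' A) {i : ℕ} (hi : i + 1 < l.length) :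
    A (l[i]'(by omega)) (l[i+1]'hi) := by
  have := List.isChain_iff_getElem.mp h i (by omega)
  simpa using this

end Helpers


section Pre

variable {A : V → V → Prop} {W : Finset V} {P₀ : Finset (List V)} [Inhabited V]

/-- Rotation lemma: any long path in a (k-1)-optimal partition of the complement of
the heads can be rearranged so that the predecessor of its head is a head of `P₀`. -/
lemma pre (hirr : Irreflexive A) (hout : OutSemicomplete A)
    (hP : PartOn A W P₀) {k : ℕ} (hk : 2 ≤ k) :
    ∀ (n : ℕ) (Q : Finset (List V)) (t : List V),
    OptOn A (k-1) (W \ P₀.image (fun p => p.headI)) Q → t ∈ Q → k ≤ t.length →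
    idxOf P₀ t.headI ≤ n →
    ∃ (qq : List V) (s : V), IsPath A qq ∧ qq.toFinset = t.toFinset ∧
      qq.length = t.length ∧ s = predv P₀ qq.headI ∧ A s qq.headI ∧
      s ∈ P₀.image (fun p => p.headI) ∧ qq.headI ∈ W \ P₀.image (fun p => p.headI) := by
  intro n
  induction n using Nat.strong_induction_on with
  | _ n ih =>
  intro Q t hQ ht hlen hidx
  set S := P₀.image (fun p => p.headI) with hS
  set W' := W \ S with hW'
  have htne : t ≠ [] := path_ne_nil hQ.1 ht
  have hht : t.headI ∈ t := headI_mem' htne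
  have hhW' : t.headI ∈ W' := hQ.1.2.2.1 t ht _ hht
  have hhW : t.headI ∈ W := (Finset.mem_sdiff.mp hhW').1
  have hhS : t.headI ∉ S := (Finset.mem_sdiff.mp hhW').2
  set h := t.headI with hh
  set x := predv P₀ h with hx
  have harc : A x h := predv_arc hP hhW hhS
  by_cases hxS : x ∈ S
  · exact ⟨t, x, hQ.1.1 t ht, rfl, rfl, rfl, harc, hxS, hhW'⟩
  have hxW : x ∈ W := predv_mem_W hP hhW hhS
  have hxW' : x ∈ W' := Finset.mem_sdiff.mpr ⟨hxW, hxS⟩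
  obtain ⟨q', hq', hxq'⟩ := hQ.1.2.2.2 x hxW'
  have hxh : x ≠ h := fun he => hirr h (he ▸ harc)
  by_cases hq't : q' = t
  · -- rotation case
    have hxt : x ∈ t := hq't ▸ hxq'
    obtain ⟨tt, htt⟩ : ∃ tt, t = h :: tt := by
      rw [hh]
      cases t with
      | nil => exact absurd rfl htne
      | cons a s => exact ⟨s, rfl⟩
    have hxtt : x ∈ tt := by
      have hxq2 : x ∈ h :: tt := htt ▸ hxt
      rcases List.mem_cons.mp hxq2 with h1 | h1
      · exact absurd h1 hxh
      · exact h1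
    set j := tt.idxOf x with hj
    have hjlt : j < tt.length := List.idxOf_lt_length_iff.mpr hxtt
    have hq'nd : (h :: tt).Nodup := htt ▸ path_nodup hQ.1 ht
    have hq'ch : (h :: tt).Chain' A := htt ▸ path_chain hQ.1 ht
    have httch : tt.Chain' A := List.IsChain.tail hq'ch
    have c₁ : (x :: (h :: tt.take j)).Chain' A := by
      refine List.isChain_cons_cons.mpr ⟨harc, ?_⟩
      have := hq'ch.take (j+1)
      rwa [List.take_succ_cons] at this
    have c₂ : (x :: tt.drop (j+1)).Chain' A := by
      have := httch.drop j
      rwa [drop_indexOf hxtt] at this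
    have htt2 : tt = tt.take j ++ x :: tt.drop (j+1) := by
      conv_lhs => rw [← List.take_append_drop j tt]
      rw [drop_indexOf hxtt]
    have hperm : t.Perm (x :: ((h :: tt.take j) ++ tt.drop (j+1))) := by
      conv_lhs => rw [htt, htt2]
      have heq : h :: (tt.take j ++ x :: tt.drop (j+1))
          = (h :: tt.take j) ++ x :: tt.drop (j+1) := by simp
      rw [heq]
      exact List.perm_middle
    have htnd : t.Nodup := path_nodup hQ.1 ht
    have hnd : (x :: ((h :: tt.take j) ++ tt.drop (j+1))).Nodup := hperm.nodup htnd
    obtain ⟨r, hr, hrch⟩ := merge_lemma hout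
      ((h :: tt.take j).length + (tt.drop (j+1)).length)
      (h :: tt.take j) (tt.drop (j+1)) x le_rfl c₁ c₂ hnd
    have hqqperm : (x :: r).Perm t := ((hr.cons x).trans hperm.symm)
    have hqqpath : IsPath A (x :: r) :=
      ⟨List.cons_ne_nil _ _, hqqperm.nodup_iff.mpr htnd, hrch⟩
    have hqqfin : (x :: r).toFinset = t.toFinset := List.toFinset_eq_of_perm _ _ hqqperm
    have hqqlen : (x :: r).length = t.length := hqqperm.length_eq
    obtain ⟨hpart₂, hnorm₂⟩ :=
      swap11 (k := k-1) hQ.1 ht hqqpath hqqfin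
    have hopt₂ : OptOn A (k-1) W' (insert (x :: r) (Q.erase t)) := by
      refine ⟨hpart₂, fun R hR => ?_⟩
      have h1 := hQ.2 R hR
      omega
    have hxidx : idxOf P₀ x = idxOf P₀ h - 1 := (predv_spec hP hhW hhS).2.1
    have hpos : 1 ≤ idxOf P₀ h := idx_pos hP hhW hhS
    have hrec := ih (idxOf P₀ h - 1) (by omega) (insert (x :: r) (Q.erase t)) (x :: r)
      hopt₂ (Finset.mem_insert_self _ _) (by omega)
      (by show idxOf P₀ x ≤ _; omega)
    obtain ⟨qh, s, hp1, hp2, hp3, hp4, hp5, hp6, hp7⟩ := hrec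
    exact ⟨qh, s, hp1, hp2.trans hqqfin, by omega, hp4, hp5, hp6, hp7⟩
  · -- contradiction case: x lies on a different path of Q
    exfalso
    have hi'lt : q'.idxOf x < q'.length := List.idxOf_lt_length_iff.mpr hxq'
    set i' := q'.idxOf x with hi'
    set σ := q'.drop (i'+1) with hσ
    have hq'ch : q'.Chain' A := path_chain hQ.1 hq'
    have hq'nd : q'.Nodup := path_nodup hQ.1 hq'
    have htnd : t.Nodup := path_nodup hQ.1 ht
    have hdisj : ∀ y ∈ q', y ∉ t := fun y => hQ.1.2.1 q' hq' t ht hq't y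
    have hdrop : q'.drop i' = x :: σ := drop_indexOf hxq'
    have c₂ : (x :: σ).Chain' A := by
      have := hq'ch.drop i'
      rwa [hdrop] at this
    have c₃ : (x :: t).Chain' A := chain'_cons_headI htne harc (path_chain hQ.1 ht)
    have hxσnd : (x :: σ).Nodup := by
      rw [← hdrop]
      exact (List.drop_sublist i' q').nodup hq'nd
    have hnd : (x :: (σ ++ t)).Nodup := by
      rw [show x :: (σ ++ t) = (x :: σ) ++ t from rfl]
      refine List.nodup_append.mpr ⟨hxσnd, htnd, ?_⟩
      intro y hy z hz hyz
      have hyt : y ∈ t := hyz ▸ hz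
      have hyq' : y ∈ q' := by
        have : y ∈ q'.drop i' := hdrop ▸ hy
        exact List.mem_of_mem_drop this
      exact hdisj y hyq' hyt
    obtain ⟨r, hr, hrch⟩ := merge_lemma hout (σ.length + t.length) σ t x le_rfl c₂ c₃ hnd
    set m := q'.take i' ++ (x :: r) with hm
    have hmperm : m.Perm (q' ++ t) := by
      have h1 : (x :: r).Perm (x :: (σ ++ t)) := hr.cons x
      have h2 : m.Perm (q'.take i' ++ (x :: (σ ++ t))) := h1.append_left _
      refine h2.trans ?_
      have h3 : q'.take i' ++ (x :: (σ ++ t)) = (q'.take i' ++ (x :: σ)) ++ t := by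
        simp
      rw [h3]
      have h4 : q'.take i' ++ (x :: σ) = q' := by
        conv_rhs => rw [← List.take_append_drop i' q']
        rw [hdrop]
      rw [h4]
    have hq'tnd : (q' ++ t).Nodup := List.nodup_append.mpr ⟨hq'nd, htnd,
      fun y hy z hz hyz => hdisj y hy (hyz ▸ hz)⟩
    have hmnd : m.Nodup := hmperm.nodup_iff.mpr hq'tnd
    have hmch : m.Chain' A := by
      refine List.isChain_append.mpr ⟨hq'ch.take i', hrch, ?_⟩
      intro y hy z hz
      simp only [List.head?_cons, Option.mem_def, Option.some.injEq] at hz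
      subst hz
      by_cases hi0 : i' = 0
      · rw [hi0] at hy; simp at hy
      · have h1le : 1 ≤ i' := by omega
        rw [getLast?_take h1le (by omega)] at hy
        simp only [Option.mem_def, Option.some.injEq] at hy
        subst hy
        have hcg := chain'_get hq'ch (i := i'-1) (by omega)
        simp only [show i' - 1 + 1 = i' from by omega] at hcg
        rwa [List.getElem_idxOf hi'lt] at hcg
    have hmlen : m.length = q'.length + t.length := by
      rw [hmperm.length_eq, List.length_append]
    have hmne : m ≠ [] := by
      have hpos : 0 < m.length := by
        rw [hmlen]
        have := List.length_pos_iff.mpr htne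
        omega
      exact List.ne_nil_of_length_pos hpos
    have hmfin : m.toFinset = q'.toFinset ∪ t.toFinset := by
      rw [List.toFinset_eq_of_perm _ _ hmperm, List.toFinset_append]
    obtain ⟨hpart₂, hnorm₂⟩ := swap21 (k := k-1) hQ.1 hq' ht hq't ⟨hmne, hmnd, hmch⟩ hmfin
    have hle := hQ.2 _ hpart₂
    have hq'pos : 0 < q'.length := List.length_pos_iff.mpr (path_ne_nil hQ.1 hq')
    have htlen : k ≤ t.length := hlen
    rw [hmlen] at hnorm₂
    have hmin1 : min t.length (k-1) = k-1 := by omega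
    have hmin2 : min (q'.length + t.length) (k-1) = k-1 := by omega
    omega

end Pre

section Iter

variable {A : V → V → Prop} {W : Finset V} {k : ℕ}

lemma iter (hk : 2 ≤ k) :
    ∀ (n : ℕ) (F R : Finset (List V)) (mf : List V → List V) (sf : List V → V),
    F.card = n → PartOn A W R → F ⊆ R →
    (∀ q ∈ F, k ≤ q.length ∧ IsPath A (mf q) ∧
      (mf q).toFinset = insert (sf q) q.toFinset ∧ (mf q).length = q.length + 1 ∧
      [sf q] ∈ R ∧ [sf q] ∉ F) →
    (∀ q ∈ F, ∀ q' ∈ F, q ≠ q' → sf q ≠ sf q') →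
    ∃ R', PartOn A W R' ∧ knorm k R' + F.card = knorm k R := by
  intro n
  induction n with
  | zero =>
    intro F R mf sf hcard hR hFR hdata hinj
    have hF : F = ∅ := Finset.card_eq_zero.mp hcard
    subst hF
    exact ⟨R, hR, by simp⟩
  | succ n ih =>
    intro F R mf sf hcard hR hFR hdata hinj
    have hFne : F.Nonempty := Finset.card_pos.mp (by omega)
    obtain ⟨q, hq⟩ := hFne
    obtain ⟨hql, hqpath, hqfin, hqlen, hsR, hsF⟩ := hdata q hq
    have hq2 : 2 ≤ q.length := by omega
    have hsq : [sf q] ≠ q := by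
      intro he
      have : q.length = 1 := by rw [← he]; rfl
      omega
    have hmfin : (mf q).toFinset = [sf q].toFinset ∪ q.toFinset := by
      rw [hqfin]; simp
    obtain ⟨hpart₂, hnorm₂⟩ := swap21 (k := k) hR hsR (hFR hq) hsq hqpath hmfin
    set R₂ := insert (mf q) ((R.erase [sf q]).erase q) with hR₂
    have hqR : q ∈ R := hFR hq
    have hsub : F.erase q ⊆ R₂ := by
      intro q' hq'
      have hq'F : q' ∈ F := Finset.mem_of_mem_erase hq'
      have hq'q : q' ≠ q := Finset.ne_of_mem_erase hq'
      have hq's : q' ≠ [sf q] := by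
        intro he; exact hsF (he ▸ hq'F)
      exact Finset.mem_insert_of_mem (Finset.mem_erase_of_ne_of_mem hq'q
        (Finset.mem_erase_of_ne_of_mem hq's (hFR hq'F)))
    have hdata' : ∀ q' ∈ F.erase q, k ≤ q'.length ∧ IsPath A (mf q') ∧
        (mf q').toFinset = insert (sf q') q'.toFinset ∧ (mf q').length = q'.length + 1 ∧
        [sf q'] ∈ R₂ ∧ [sf q'] ∉ F.erase q := by
      intro q' hq'
      have hq'F : q' ∈ F := Finset.mem_of_mem_erase hq'
      have hq'q : q' ≠ q := Finset.ne_of_mem_erase hq'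
      obtain ⟨h1, h2, h3, h4, h5, h6⟩ := hdata q' hq'F
      refine ⟨h1, h2, h3, h4, ?_, fun hc => h6 (Finset.mem_of_mem_erase hc)⟩
      have hss : [sf q'] ≠ [sf q] := by
        intro he
        injection he with h7 h8
        exact hinj q' hq'F q hq hq'q h7
      have hsq' : [sf q'] ≠ q := by
        intro he
        have : q.length = 1 := by rw [← he]; rfl
        omega
      exact Finset.mem_insert_of_mem (Finset.mem_erase_of_ne_of_mem hsq'
        (Finset.mem_erase_of_ne_of_mem hss h5))
    have hinj' : ∀ q₁ ∈ F.erase q, ∀ q₂ ∈ F.erase q, q₁ ≠ q₂ → sf q₁ ≠ sf q₂ :=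
      fun q₁ h₁ q₂ h₂ hne =>
        hinj q₁ (Finset.mem_of_mem_erase h₁) q₂ (Finset.mem_of_mem_erase h₂) hne
    obtain ⟨R', hR', hRn⟩ := ih (F.erase q) R₂ mf sf
      (by rw [Finset.card_erase_of_mem hq]; omega) hpart₂ hsub hdata' hinj'
    refine ⟨R', hR', ?_⟩
    have hc : (F.erase q).card = n := by rw [Finset.card_erase_of_mem hq]; omega
    rw [hc] at hRn
    have hm1 : min (1 : ℕ) k = 1 := by omega
    have hm2 : min q.length k = k := by omega
    have hm3 : min (mf q).length k = k := by rw [hqlen]; omega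
    simp only [List.length_singleton] at hnorm₂
    omega

end Iter

section Abs

variable {A : V → V → Prop} {W : Finset V} {P₀ : Finset (List V)} {k : ℕ} [Inhabited V]

lemma heads_inj (hP : PartOn A W P₀) :
    ∀ p ∈ P₀, ∀ q ∈ P₀, p.headI = q.headI → p = q := by
  intro p hp q hq he
  exact path_unique hP hp hq (headI_mem' (path_ne_nil hP hp))
    (he ▸ headI_mem' (path_ne_nil hP hq))

lemma headI_mem_W (hP : PartOn A W P₀) {p : List V} (hp : p ∈ P₀) : p.headI ∈ W :=
  hP.2.2.1 p hp _ (headI_mem' (path_ne_nil hP hp))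

lemma tail_notin_S (hP : PartOn A W P₀) {p : List V} (hp : p ∈ P₀) {x : V}
    (hx : x ∈ p.tail) : x ∉ P₀.image (fun p => p.headI) := by
  intro hxS
  obtain ⟨q, hq, hqh⟩ := Finset.mem_image.mp hxS
  have hxp : x ∈ p := List.mem_of_mem_tail hx
  have hxq : x ∈ q := hqh ▸ headI_mem' (path_ne_nil hP hq)
  have hpq : p = q := path_unique hP hp hq hxp hxq
  subst hpq
  have hnd := path_nodup hP hp
  cases p with
  | nil => simp at hx
  | cons a t =>
    have : x = a := hqh.symm
    subst this
    exact (List.nodup_cons.mp hnd).1 hx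

/-- The tails of a k-optimal partition with head set removed form a
(k-1)-optimal partition. -/
lemma abs_opt (hirr : Irreflexive A) (hout : OutSemicomplete A) (hk : 2 ≤ k)
    (hopt : OptOn A k W P₀) :
    OptOn A (k-1) (W \ P₀.image (fun p => p.headI))
        ((P₀.filter (fun p => 2 ≤ p.length)).image List.tail) ∧
      knorm (k-1) ((P₀.filter (fun p => 2 ≤ p.length)).image List.tail) + P₀.card
        = knorm k P₀ := by
  classical
  set S := P₀.image (fun p => p.headI) with hS
  set W' := W \ S with hW'
  set P' := (P₀.filter (fun p => 2 ≤ p.length)).image List.tail with hP'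
  have hP := hopt.1
  -- injectivity of tail on long paths
  have htinj : ∀ p ∈ P₀.filter (fun p => 2 ≤ p.length),
      ∀ q ∈ P₀.filter (fun p => 2 ≤ p.length), p.tail = q.tail → p = q := by
    intro p hp q hq he
    have hp2 := Finset.mem_filter.mp hp
    have hq2 := Finset.mem_filter.mp hq
    have htne : p.tail ≠ [] := by
      intro hc
      have := List.length_tail (l := p)
      rw [hc] at this
      simp at this
      omega
    obtain ⟨x, hx⟩ := List.exists_mem_of_ne_nil _ htne
    exact path_unique hP hp2.1 hq2.1 (List.mem_of_mem_tail hx)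
      (List.mem_of_mem_tail (he ▸ hx))
  -- basic facts about members of P'
  have hmemP' : ∀ p' ∈ P', ∃ p ∈ P₀, 2 ≤ p.length ∧ p' = p.tail := by
    intro p' hp'
    obtain ⟨p, hp, rfl⟩ := Finset.mem_image.mp hp'
    have := Finset.mem_filter.mp hp
    exact ⟨p, this.1, this.2, rfl⟩
  -- P' is a partition of W'
  have hP'part : PartOn A W' P' := by
    refine ⟨?_, ?_, ?_, ?_⟩
    · intro p' hp'
      obtain ⟨p, hp, hl, rfl⟩ := hmemP' p' hp'
      refine ⟨?_, (List.tail_sublist p).nodup (path_nodup hP hp), (path_chain hP hp).tail⟩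
      intro hc
      have := List.length_tail (l := p)
      rw [hc] at this
      simp at this
      omega
    · intro p' hp' q' hq' hne x hxp hxq
      obtain ⟨p, hp, hlp, rfl⟩ := hmemP' p' hp'
      obtain ⟨q, hq, hlq, rfl⟩ := hmemP' q' hq'
      have hpq : p ≠ q := fun he => hne (he ▸ rfl)
      exact hP.2.1 p hp q hq hpq x (List.mem_of_mem_tail hxp) (List.mem_of_mem_tail hxq)
    · intro p' hp' x hx
      obtain ⟨p, hp, hlp, rfl⟩ := hmemP' p' hp'
      exact Finset.mem_sdiff.mpr ⟨hP.2.2.1 p hp x (List.mem_of_mem_tail hx),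
        tail_notin_S hP hp hx⟩
    · intro v hv
      have hvW : v ∈ W := (Finset.mem_sdiff.mp hv).1
      have hvS : v ∉ S := (Finset.mem_sdiff.mp hv).2
      obtain ⟨p, hp, hvp⟩ := hP.2.2.2 v hvW
      have hvh : v ≠ p.headI := by
        intro he
        exact hvS (Finset.mem_image.mpr ⟨p, hp, he.symm⟩)
      have hvt : v ∈ p.tail := by
        cases p with
        | nil => simp at hvp
        | cons a t =>
          rcases List.mem_cons.mp hvp with h1 | h1
          · exact absurd h1 hvh
          · exact h1
      have hl2 : 2 ≤ p.length := by
        cases p with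
        | nil => simp at hvp
        | cons a t =>
          cases t with
          | nil => simp at hvt
          | cons b u => simp
      exact ⟨p.tail, Finset.mem_image.mpr ⟨p, Finset.mem_filter.mpr ⟨hp, hl2⟩, rfl⟩, hvt⟩
  -- bookkeeping
  have hbook : knorm (k-1) P' + P₀.card = knorm k P₀ := by
    have h1 : knorm (k-1) P' = ∑ p ∈ P₀.filter (fun p => 2 ≤ p.length),
        min (p.length - 1) (k-1) := by
      rw [knorm, hP', Finset.sum_image htinj]
      refine Finset.sum_congr rfl fun p hp => ?_
      rw [List.length_tail]
    have h2 : ∀ p ∈ P₀, min p.length k = min (p.length - 1) (k-1) + 1 := by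
      intro p hp
      have := List.length_pos_iff.mpr (path_ne_nil hP hp)
      omega
    have h3 : knorm k P₀ = ∑ p ∈ P₀, (min (p.length - 1) (k-1) + 1) :=
      Finset.sum_congr rfl h2
    have h4 : ∑ p ∈ P₀, (min (p.length - 1) (k-1) + 1)
        = ∑ p ∈ P₀, min (p.length - 1) (k-1) + P₀.card := by
      rw [Finset.sum_add_distrib]
      simp
    have h5 : ∑ p ∈ P₀, min (p.length - 1) (k-1)
        = ∑ p ∈ P₀.filter (fun p => 2 ≤ p.length), min (p.length - 1) (k-1) := by
      rw [← Finset.sum_filter_add_sum_filter_not P₀ (fun p => 2 ≤ p.length)]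
      have : ∀ p ∈ P₀.filter (fun p => ¬ 2 ≤ p.length), min (p.length - 1) (k-1) = 0 := by
        intro p hp
        have h6 := Finset.mem_filter.mp hp
        have := List.length_pos_iff.mpr (path_ne_nil hP h6.1)
        have : p.length = 1 := by omega
        simp [this]
      rw [Finset.sum_congr rfl this]
      simp
    omega
  refine ⟨⟨hP'part, ?_⟩, hbook⟩
  -- optimality
  intro Q hQpart
  obtain ⟨Qo, hQo⟩ := exists_optOn A (k-1) W'
  have hQoQ : knorm (k-1) Qo ≤ knorm (k-1) Q := hQo.2 Q hQpart
  suffices hsuff : knorm (k-1) P' ≤ knorm (k-1) Qo by omega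
  -- the set of long paths of Qo
  set F := Qo.filter (fun q => k ≤ q.length) with hF
  have hdata : ∀ q ∈ F, ∃ (qq : List V) (s : V), IsPath A qq ∧ qq.toFinset = q.toFinset ∧
      qq.length = q.length ∧ s = predv P₀ qq.headI ∧ A s qq.headI ∧
      s ∈ S ∧ qq.headI ∈ W' := by
    intro q hq
    have hq' := Finset.mem_filter.mp hq
    exact pre hirr hout hP hk (idxOf P₀ q.headI) Qo q hQo hq'.1 hq'.2 le_rfl
  choose! qqf sf hd1 hd2 hd3 hd4 hd5 hd6 hd7 using hdata
  -- the augmented partition of W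
  set R₀ := Qo ∪ S.image (fun s => [s]) with hR₀
  have hSW : S ⊆ W := by
    intro s hs
    obtain ⟨p, hp, rfl⟩ := Finset.mem_image.mp hs
    exact headI_mem_W hP hp
  have hQoW' : ∀ q ∈ Qo, ∀ x ∈ q, x ∈ W' := hQo.1.2.2.1
  have hsingnotQo : ∀ s ∈ S, [s] ∉ Qo := by
    intro s hs hc
    have := hQoW' [s] hc s (by simp)
    rw [hW'] at this
    exact (Finset.mem_sdiff.mp this).2 hs
  have hR₀part : PartOn A W R₀ := by
    refine ⟨?_, ?_, ?_, ?_⟩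
    · intro p hp
      rcases Finset.mem_union.mp hp with h1 | h1
      · exact hQo.1.1 p h1
      · obtain ⟨sv, hsv, rfl⟩ := Finset.mem_image.mp h1
        exact ⟨by simp, by simp, by simp [List.Chain']⟩
    · intro p hp q hq hpq x hxp hxq
      rcases Finset.mem_union.mp hp with h1 | h1 <;> rcases Finset.mem_union.mp hq with h2 | h2
      · exact hQo.1.2.1 p h1 q h2 hpq x hxp hxq
      · obtain ⟨sv, hsv, rfl⟩ := Finset.mem_image.mp h2
        simp only [List.mem_singleton] at hxq
        subst hxq
        have := hQoW' p h1 x hxp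
        exact (Finset.mem_sdiff.mp this).2 hsv
      · obtain ⟨sv, hsv, rfl⟩ := Finset.mem_image.mp h1
        simp only [List.mem_singleton] at hxp
        subst hxp
        have := hQoW' q h2 x hxq
        exact absurd hsv (Finset.mem_sdiff.mp this).2
      · obtain ⟨sv, hsv, rfl⟩ := Finset.mem_image.mp h1
        obtain ⟨sw, hsw, rfl⟩ := Finset.mem_image.mp h2
        simp only [List.mem_singleton] at hxp hxq
        subst hxp; subst hxq
        exact hpq rfl
    · intro p hp x hx
      rcases Finset.mem_union.mp hp with h1 | h1
      · exact (Finset.mem_sdiff.mp (hQoW' p h1 x hx)).1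
      · obtain ⟨sv, hsv, rfl⟩ := Finset.mem_image.mp h1
        simp only [List.mem_singleton] at hx
        subst hx
        exact hSW hsv
    · intro v hv
      by_cases hvS : v ∈ S
      · exact ⟨[v], Finset.mem_union_right _ (Finset.mem_image_of_mem _ hvS), by simp⟩
      · obtain ⟨q, hq, hvq⟩ := hQo.1.2.2.2 v (Finset.mem_sdiff.mpr ⟨hv, hvS⟩)
        exact ⟨q, Finset.mem_union_left _ hq, hvq⟩
  have hdisjR₀ : Disjoint Qo (S.image (fun s => [s])) := by
    rw [Finset.disjoint_right]
    intro l hl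
    obtain ⟨sv, hsv, rfl⟩ := Finset.mem_image.mp hl
    exact hsingnotQo sv hsv
  have hknormR₀ : knorm k R₀ = knorm k Qo + S.card := by
    rw [knorm, hR₀, Finset.sum_union hdisjR₀]
    congr 1
    rw [Finset.sum_image (fun a _ b _ h => by injection h)]
    have : ∀ s ∈ S, min ([s].length) k = 1 := fun s _ => by simp; omega
    rw [Finset.sum_congr rfl this]
    simp
  -- apply the absorption iteration
  have hiterdata : ∀ q ∈ F, k ≤ q.length ∧ IsPath A (sf q :: qqf q) ∧
      (sf q :: qqf q).toFinset = insert (sf q) q.toFinset ∧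
      (sf q :: qqf q).length = q.length + 1 ∧ [sf q] ∈ R₀ ∧ [sf q] ∉ F := by
    intro q hq
    have hqQo : q ∈ Qo := (Finset.mem_filter.mp hq).1
    have hqql : k ≤ q.length := (Finset.mem_filter.mp hq).2
    have hqqne : qqf q ≠ [] := (hd1 q hq).1
    have hsnotin : sf q ∉ qqf q := by
      intro hc
      have h1 : sf q ∈ q.toFinset := (hd2 q hq) ▸ List.mem_toFinset.mpr hc
      have h2 := hQoW' q hqQo _ (List.mem_toFinset.mp h1)
      exact (Finset.mem_sdiff.mp h2).2 (hd6 q hq)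
    refine ⟨(Finset.mem_filter.mp hq).2, ?_, ?_, ?_, ?_, ?_⟩
    · refine ⟨List.cons_ne_nil _ _, List.nodup_cons.mpr ⟨hsnotin, (hd1 q hq).2.1⟩, ?_⟩
      exact chain'_cons_headI hqqne (hd5 q hq) (hd1 q hq).2.2
    · rw [List.toFinset_cons, hd2 q hq]
    · simp [hd3 q hq]
    · exact Finset.mem_union_right _ (Finset.mem_image_of_mem _ (hd6 q hq))
    · intro hc
      have hcQo : [sf q] ∈ Qo := (Finset.mem_filter.mp hc).1
      exact hsingnotQo (sf q) (hd6 q hq) hcQo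
  have hiterinj : ∀ q ∈ F, ∀ q' ∈ F, q ≠ q' → sf q ≠ sf q' := by
    intro q hq q' hq' hne he
    have hq1 : (qqf q).headI ∈ q := by
      have := List.mem_toFinset.mpr (headI_mem' (hd1 q hq).1)
      rw [hd2 q hq] at this
      exact List.mem_toFinset.mp this
    have hq2 : (qqf q').headI ∈ q' := by
      have := List.mem_toFinset.mpr (headI_mem' (hd1 q' hq').1)
      rw [hd2 q' hq'] at this
      exact List.mem_toFinset.mp this
    have hW1 := Finset.mem_sdiff.mp (hd7 q hq)
    have hW2 := Finset.mem_sdiff.mp (hd7 q' hq')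
    have heads : (qqf q).headI = (qqf q').headI := by
      apply predv_inj hP hW1.1 hW2.1 hW1.2 hW2.2
      rw [← hd4 q hq, ← hd4 q' hq', he]
    have : (qqf q).headI ∈ q' := heads ▸ hq2
    exact hQo.1.2.1 q (Finset.mem_filter.mp hq).1 q' (Finset.mem_filter.mp hq').1 hne
      _ hq1 this
  obtain ⟨R', hR'part, hR'norm⟩ := iter hk F.card F R₀ (fun q => sf q :: qqf q) sf rfl
    hR₀part (Finset.filter_subset _ _ |>.trans (Finset.subset_union_left)) hiterdata hiterinj
  -- norm comparisons
  have hQosplit : knorm k Qo = knorm (k-1) Qo + F.card := by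
    rw [knorm, knorm, hF, Finset.card_filter]
    rw [← Finset.sum_add_distrib]
    refine Finset.sum_congr rfl fun q hq => ?_
    by_cases hql : k ≤ q.length
    · simp [hql]; omega
    · simp [hql]; omega
  have hfinal := hopt.2 R' hR'part
  have hScard : S.card = P₀.card := by
    rw [hS]
    exact Finset.card_image_of_injOn (fun p hp q hq => heads_inj hP p hp q hq)
  omega

end Abs

section Transfer

variable {k : ℕ}

lemma transfer_count (C : Fin k → Finset V)
    (hdisj : ∀ i j, i ≠ j → Disjoint (C i) (C j)) {m p : List V} (hmnd : m.Nodup)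
    (hmk : m.length ≤ k)
    (hm : min m.length k ≤ (Finset.univ.filter fun i => ∃ x ∈ m, x ∈ C i).card)
    (hsub : ∀ x ∈ p, x ∈ m) (hpnd : p.Nodup) :
    min p.length k ≤ (Finset.univ.filter fun i => ∃ x ∈ p, x ∈ C i).card := by
  classical
  set H := Finset.univ.filter fun i : Fin k => ∃ x ∈ m, x ∈ C i with hH
  have hmlen : min m.length k = m.length := by omega
  rw [hmlen] at hm
  have hdisj' : ∀ i ∈ H, ∀ j ∈ H, i ≠ j →
      Disjoint (C i ∩ m.toFinset) (C j ∩ m.toFinset) := by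
    intro i _ j _ hij
    exact (hdisj i j hij).mono Finset.inter_subset_left Finset.inter_subset_left
  have hcardB : (H.biUnion fun i => C i ∩ m.toFinset).card
      = ∑ i ∈ H, (C i ∩ m.toFinset).card := Finset.card_biUnion hdisj'
  have hBsub : (H.biUnion fun i => C i ∩ m.toFinset) ⊆ m.toFinset := by
    intro x hx
    obtain ⟨i, _, hxi⟩ := Finset.mem_biUnion.mp hx
    exact (Finset.mem_inter.mp hxi).2
  have hone : ∀ i ∈ H, 1 ≤ (C i ∩ m.toFinset).card := by
    intro i hi
    obtain ⟨x, hxm, hxi⟩ := (Finset.mem_filter.mp hi).2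
    exact Finset.card_pos.mpr ⟨x, Finset.mem_inter.mpr ⟨hxi, List.mem_toFinset.mpr hxm⟩⟩
  have hmtf : m.toFinset.card = m.length := List.toFinset_card_of_nodup hmnd
  have hsum_ge : H.card ≤ ∑ i ∈ H, (C i ∩ m.toFinset).card := by
    calc H.card = ∑ _i ∈ H, 1 := by simp
    _ ≤ _ := Finset.sum_le_sum hone
  have hsum_le : ∑ i ∈ H, (C i ∩ m.toFinset).card ≤ m.length := by
    rw [← hcardB, ← hmtf]
    exact Finset.card_le_card hBsub
  -- every color class in H meets m in exactly one vertex
  have hsingle : ∀ i ∈ H, (C i ∩ m.toFinset).card = 1 := by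
    by_contra hc
    push_neg at hc
    obtain ⟨i₀, hi₀, hne⟩ := hc
    have h2 : 2 ≤ (C i₀ ∩ m.toFinset).card := by
      have := hone i₀ hi₀
      omega
    have hsplit : ∑ i ∈ H, (C i ∩ m.toFinset).card
        = ∑ i ∈ H.erase i₀, (C i ∩ m.toFinset).card + (C i₀ ∩ m.toFinset).card :=
      (Finset.sum_erase_add _ _ hi₀).symm
    have herase : (H.erase i₀).card ≤ ∑ i ∈ H.erase i₀, (C i ∩ m.toFinset).card := by
      calc (H.erase i₀).card = ∑ _i ∈ H.erase i₀, 1 := by simp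
      _ ≤ _ := Finset.sum_le_sum fun i hi => hone i (Finset.mem_of_mem_erase hi)
    have hcard_er : (H.erase i₀).card = H.card - 1 := Finset.card_erase_of_mem hi₀
    have hHpos : 1 ≤ H.card := Finset.card_pos.mpr ⟨i₀, hi₀⟩
    omega
  -- every vertex of m is colored
  have hcover : ∀ x ∈ m, ∃ i ∈ H, x ∈ C i := by
    intro x hx
    have hBall : m.toFinset ⊆ H.biUnion fun i => C i ∩ m.toFinset := by
      apply Finset.subset_of_eq
      symm
      apply Finset.eq_of_subset_of_card_le hBsub
      rw [hcardB, hmtf]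
      omega
    obtain ⟨i, hi, hxi⟩ := Finset.mem_biUnion.mp (hBall (List.mem_toFinset.mpr hx))
    exact ⟨i, hi, (Finset.mem_inter.mp hxi).1⟩
  -- now count colors met by p
  set Hp := Finset.univ.filter fun i : Fin k => ∃ x ∈ p, x ∈ C i with hHp
  have hHpH : Hp ⊆ H := by
    intro i hi
    obtain ⟨x, hxp, hxi⟩ := (Finset.mem_filter.mp hi).2
    exact Finset.mem_filter.mpr ⟨Finset.mem_univ _, x, hsub x hxp, hxi⟩
  have hpcov : p.toFinset ⊆ Hp.biUnion fun i => C i ∩ p.toFinset := by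
    intro x hx
    obtain ⟨i, hi, hxi⟩ := hcover x (hsub x (List.mem_toFinset.mp hx))
    refine Finset.mem_biUnion.mpr ⟨i, ?_, Finset.mem_inter.mpr ⟨hxi, hx⟩⟩
    exact Finset.mem_filter.mpr ⟨Finset.mem_univ _, x, List.mem_toFinset.mp hx, hxi⟩
  have hple : p.length ≤ Hp.card := by
    have h1 : p.toFinset.card ≤ (Hp.biUnion fun i => C i ∩ p.toFinset).card :=
      Finset.card_le_card hpcov
    have h2 : (Hp.biUnion fun i => C i ∩ p.toFinset).card
        ≤ ∑ i ∈ Hp, (C i ∩ p.toFinset).card := Finset.card_biUnion_le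
    have h3 : ∑ i ∈ Hp, (C i ∩ p.toFinset).card ≤ ∑ _i ∈ Hp, 1 := by
      refine Finset.sum_le_sum fun i hi => ?_
      have hsub2 : C i ∩ p.toFinset ⊆ C i ∩ m.toFinset := by
        refine Finset.inter_subset_inter (le_refl _) ?_
        intro x hx
        exact List.mem_toFinset.mpr (hsub x (List.mem_toFinset.mp hx))
      have := Finset.card_le_card hsub2
      rw [hsingle i (hHpH hi)] at this
      omega
    have h4 : p.toFinset.card = p.length := List.toFinset_card_of_nodup hpnd
    simp only [Finset.sum_const, smul_eq_mul, mul_one] at h3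
    omega
  omega

end Transfer

section MergeStep

variable {A : V → V → Prop} {W : Finset V} {P : Finset (List V)} {k : ℕ} [Inhabited V]

lemma merge_step (hout : OutSemicomplete A) (hk : 0 < k) (hopt : OptOn A k W P)
    {p q : List V} (hp : p ∈ P) (hq : q ∈ P) (hpq : p ≠ q)
    (harc : A p.headI q.headI) :
    ∃ m, IsPath A m ∧ m.length = p.length + q.length ∧ (∀ x ∈ p, x ∈ m) ∧
      (∀ x ∈ q, x ∈ m) ∧ m.length ≤ k ∧
      OptOn A k W (insert m ((P.erase p).erase q)) ∧
      (insert m ((P.erase p).erase q)).card < P.card ∧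
      m ∈ insert m ((P.erase p).erase q) := by
  have hP := hopt.1
  have hpne := path_ne_nil hP hp
  have hqne := path_ne_nil hP hq
  have hdisj : ∀ y ∈ p, y ∉ q := fun y => hP.2.1 p hp q hq hpq y
  have hpqnd : (p ++ q).Nodup :=
    List.nodup_append.mpr ⟨path_nodup hP hp, path_nodup hP hq,
      fun y hy z hz hyz => hdisj y hy (hyz ▸ hz)⟩
  obtain ⟨a, tp, rfl⟩ : ∃ a tp, p = a :: tp := by
    cases p with
    | nil => exact absurd rfl hpne
    | cons a tp => exact ⟨a, tp, rfl⟩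
  have hheadI : (a :: tp).headI = a := rfl
  rw [hheadI] at harc
  have c₁ : (a :: tp).Chain' A := path_chain hP hp
  have c₂ : (a :: q).Chain' A := chain'_cons_headI hqne harc (path_chain hP hq)
  have hnd : (a :: (tp ++ q)).Nodup := by
    rw [show a :: (tp ++ q) = (a :: tp) ++ q from rfl]
    exact hpqnd
  obtain ⟨r, hr, hrch⟩ := merge_lemma hout (tp.length + q.length) tp q a le_rfl c₁ c₂ hnd
  set m := a :: r with hm
  have hmperm : m.Perm ((a :: tp) ++ q) := by
    rw [show (a :: tp) ++ q = a :: (tp ++ q) from rfl]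
    exact hr.cons a
  have hmnd : m.Nodup := hmperm.nodup_iff.mpr hpqnd
  have hmpath : IsPath A m := ⟨List.cons_ne_nil _ _, hmnd, hrch⟩
  have hmlen : m.length = (a :: tp).length + q.length := by
    rw [hmperm.length_eq, List.length_append]
  have hmemp : ∀ x ∈ (a :: tp), x ∈ m := by
    intro x hx
    rw [hmperm.mem_iff, List.mem_append]
    exact Or.inl hx
  have hmemq : ∀ x ∈ q, x ∈ m := by
    intro x hx
    rw [hmperm.mem_iff, List.mem_append]
    exact Or.inr hx
  have hmfin : m.toFinset = (a :: tp).toFinset ∪ q.toFinset := by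
    rw [List.toFinset_eq_of_perm _ _ hmperm, List.toFinset_append]
  obtain ⟨hpart₂, hnorm₂⟩ := swap21 (k := k) hP hp hq hpq hmpath hmfin
  have hle := hopt.2 _ hpart₂
  have happ : 1 ≤ (a :: tp).length := by simp
  have hbpp : 1 ≤ q.length := List.length_pos_iff.mpr hqne
  have hmk : m.length ≤ k := by
    by_contra hc
    push_neg at hc
    rw [hmlen] at hc
    omega
  have heq : knorm k (insert m ((P.erase (a :: tp)).erase q)) = knorm k P := by
    omega
  have hcard2 : 2 ≤ P.card := Finset.one_lt_card.mpr ⟨_, hp, q, hq, hpq⟩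
  have hqerase : q ∈ P.erase (a :: tp) := Finset.mem_erase_of_ne_of_mem (Ne.symm hpq) hq
  have hcardlt : (insert m ((P.erase (a :: tp)).erase q)).card < P.card := by
    have h1 := Finset.card_insert_le m ((P.erase (a :: tp)).erase q)
    rw [Finset.card_erase_of_mem hqerase, Finset.card_erase_of_mem hp] at h1
    omega
  exact ⟨m, hmpath, hmlen, hmemp, hmemq, hmk,
    ⟨hpart₂, fun R hR => heq ▸ hopt.2 R hR⟩, hcardlt, Finset.mem_insert_self _ _⟩

end MergeStep


section Main

variable {A : V → V → Prop}

lemma part_card_le [Inhabited V] {W : Finset V} {P : Finset (List V)}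
    (hP : PartOn A W P) : P.card ≤ Fintype.card V := by
  have h1 : P.card = (P.image (fun p => p.headI)).card :=
    (Finset.card_image_of_injOn (fun p hp q hq => heads_inj hP p hp q hq)).symm
  rw [h1]
  exact (Finset.card_le_card (Finset.subset_univ _)).trans_eq (Finset.card_univ)

theorem main (hirr : Irreflexive A) (hout : OutSemicomplete A) :
    ∀ (n k : ℕ) (W : Finset V) (P : Finset (List V)), 0 < k → OptOn A k W P →
      k * (Fintype.card V + 1) + P.card ≤ n →
      ∃ C : Fin k → Finset V, (∀ i, DStable A ((C i : Finset V) : Set V)) ∧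
        (∀ i, C i ⊆ W) ∧ (∀ i j, i ≠ j → Disjoint (C i) (C j)) ∧ OrthoPC k C P := by
  intro n
  induction n using Nat.strong_induction_on with
  | _ n ih =>
  intro k W P hk hopt hn
  by_cases hPe : P = ∅
  · subst hPe
    refine ⟨fun _ => ∅, ?_, ?_, ?_, ?_⟩
    · intro i u hu; simp at hu
    · intro i; simp
    · intro i j _; simp
    · intro p hp; simp at hp
  obtain ⟨p₀, hp₀⟩ := Finset.nonempty_iff_ne_empty.mpr hPe
  obtain ⟨v₀, hv₀⟩ := List.exists_mem_of_ne_nil p₀ (path_ne_nil hopt.1 hp₀)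
  letI : Inhabited V := ⟨v₀⟩
  by_cases hadj : ∃ p ∈ P, ∃ q ∈ P, p ≠ q ∧ A p.headI q.headI
  · -- merge case
    obtain ⟨p, hp, q, hq, hpq, harc⟩ := hadj
    obtain ⟨m, hmpath, hmlen, hmemp, hmemq, hmk, hopt₂, hcardlt, hmP₂⟩ :=
      merge_step hout hk hopt hp hq hpq harc
    set P₂ := insert m ((P.erase p).erase q) with hP₂
    obtain ⟨C, hstab, hsubW, hdisj, horth⟩ :=
      ih (k * (Fintype.card V + 1) + P₂.card) (by omega) k W P₂ hk hopt₂ le_rfl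
    refine ⟨C, hstab, hsubW, hdisj, ?_⟩
    intro r hr
    by_cases hrp : r = p
    · subst hrp
      exact transfer_count C hdisj hmpath.2.1 hmk (horth m hmP₂) hmemp
        (path_nodup hopt.1 hr)
    by_cases hrq : r = q
    · subst hrq
      exact transfer_count C hdisj hmpath.2.1 hmk (horth m hmP₂) hmemq
        (path_nodup hopt.1 hr)
    · exact horth r (Finset.mem_insert_of_mem (Finset.mem_erase_of_ne_of_mem hrq
        (Finset.mem_erase_of_ne_of_mem hrp hr)))
  · -- nonadjacent-heads case
    push_neg at hadj
    set S := P.image (fun p => p.headI) with hS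
    have hSstable : DStable A ((S : Finset V) : Set V) := by
      intro u hu v hv huv hDAdj
      obtain ⟨p, hp, rfl⟩ := Finset.mem_image.mp (Finset.mem_coe.mp hu)
      obtain ⟨q, hq, rfl⟩ := Finset.mem_image.mp (Finset.mem_coe.mp hv)
      have hpq : p ≠ q := fun he => huv (he ▸ rfl)
      rcases hDAdj with h1 | h1
      · exact hadj p hp q hq hpq h1
      · exact hadj q hq p hp (Ne.symm hpq) h1
    have hSsubW : S ⊆ W := by
      intro u hu
      obtain ⟨p, hp, rfl⟩ := Finset.mem_image.mp hu
      exact headI_mem_W hopt.1 hp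
    have hheadmem : ∀ p ∈ P, p.headI ∈ S := fun p hp => Finset.mem_image_of_mem _ hp
    by_cases hk1 : k = 1
    · subst hk1
      refine ⟨fun _ => S, fun _ => hSstable, fun _ => hSsubW, ?_, ?_⟩
      · intro i j hij
        exact absurd (Subsingleton.elim i j) hij
      · intro p hp
        have h1 : (0 : Fin 1) ∈ Finset.univ.filter
            (fun i : Fin 1 => ∃ x ∈ p, x ∈ (fun _ => S) i) :=
          Finset.mem_filter.mpr ⟨Finset.mem_univ _,
            p.headI, headI_mem' (path_ne_nil hopt.1 hp), hheadmem p hp⟩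
        have h2 : 1 ≤ (Finset.univ.filter
            (fun i : Fin 1 => ∃ x ∈ p, x ∈ (fun _ => S) i)).card :=
          Finset.card_pos.mpr ⟨_, h1⟩
        have := List.length_pos_iff.mpr (path_ne_nil hopt.1 hp)
        omega
    have hk2 : 2 ≤ k := by omega
    obtain ⟨hoptP', hbook⟩ := abs_opt hirr hout hk2 hopt
    set W' := W \ S with hW'
    set P' := (P.filter (fun p => 2 ≤ p.length)).image List.tail with hP'
    have hcardP' : P'.card ≤ Fintype.card V := part_card_le hoptP'.1
    have hmul : k * (Fintype.card V + 1)
        = (k-1) * (Fintype.card V + 1) + (Fintype.card V + 1) := by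
      have hkk : k = (k-1) + 1 := by omega
      calc k * (Fintype.card V + 1) = ((k-1) + 1) * (Fintype.card V + 1) := by rw [← hkk]
      _ = (k-1) * (Fintype.card V + 1) + (Fintype.card V + 1) := by ring
    obtain ⟨C', hstab', hsubW', hdisj', horth'⟩ :=
      ih ((k-1) * (Fintype.card V + 1) + P'.card) (by omega) (k-1) W' P'
        (by omega) hoptP' le_rfl
    set C : Fin k → Finset V :=
      fun i => if h : (i : ℕ) < k - 1 then C' ⟨i, h⟩ else S with hC
    have hClast : ∀ (i : Fin k), ¬ ((i : ℕ) < k - 1) → C i = S := by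
      intro i hi
      simp only [hC, dif_neg hi]
    have hCsmall : ∀ (i : Fin k) (h : (i : ℕ) < k - 1), C i = C' ⟨i, h⟩ := by
      intro i hi
      simp only [hC, dif_pos hi]
    refine ⟨C, ?_, ?_, ?_, ?_⟩
    · intro i
      by_cases hi : (i : ℕ) < k - 1
      · rw [hCsmall i hi]; exact hstab' _
      · rw [hClast i hi]; exact hSstable
    · intro i
      by_cases hi : (i : ℕ) < k - 1
      · rw [hCsmall i hi]
        exact (hsubW' _).trans (Finset.sdiff_subset)
      · rw [hClast i hi]; exact hSsubW
    · intro i j hij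
      by_cases hi : (i : ℕ) < k - 1 <;> by_cases hj : (j : ℕ) < k - 1
      · rw [hCsmall i hi, hCsmall j hj]
        refine hdisj' _ _ ?_
        intro he
        apply hij
        have : (i : ℕ) = (j : ℕ) := by
          have := congrArg (fun (x : Fin (k-1)) => (x : ℕ)) he
          simpa using this
        exact Fin.ext this
      · rw [hCsmall i hi, hClast j hj]
        rw [Finset.disjoint_left]
        intro x hx hxS
        have := hsubW' ⟨i, hi⟩ hx
        exact (Finset.mem_sdiff.mp this).2 hxS
      · rw [hClast i hi, hCsmall j hj]
        rw [Finset.disjoint_right]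
        intro x hx hxS
        have := hsubW' ⟨j, hj⟩ hx
        exact (Finset.mem_sdiff.mp this).2 hxS
      · exfalso
        apply hij
        have hik : (i : ℕ) < k := i.isLt
        have hjk : (j : ℕ) < k := j.isLt
        exact Fin.ext (by omega)
    · intro p hp
      have hpne := path_ne_nil hopt.1 hp
      have hppos := List.length_pos_iff.mpr hpne
      set T := Finset.univ.filter (fun i : Fin k => ∃ x ∈ p, x ∈ C i) with hT
      have hlastlt : k - 1 < k := by omega
      set last : Fin k := ⟨k-1, hlastlt⟩ with hlast
      have hlastmem : last ∈ T := by
        refine Finset.mem_filter.mpr ⟨Finset.mem_univ _, p.headI, headI_mem' hpne, ?_⟩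
        rw [hClast last (by simp [hlast])]
        exact hheadmem p hp
      by_cases hl2 : 2 ≤ p.length
      · have htail : p.tail ∈ P' :=
          Finset.mem_image.mpr ⟨p, Finset.mem_filter.mpr ⟨hp, hl2⟩, rfl⟩
        have horthT := horth' p.tail htail
        set T' := Finset.univ.filter
          (fun i : Fin (k-1) => ∃ x ∈ p.tail, x ∈ C' i) with hT'
        have hfk : ∀ i : Fin (k-1), (i : ℕ) < k := fun i => by
          have := i.isLt; omega
        set f : Fin (k-1) → Fin k := fun i => ⟨(i : ℕ), hfk i⟩ with hf
        have hinj : ∀ i ∈ T', f i ∈ T.erase last := by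
          intro i hi
          obtain ⟨x, hxt, hxC⟩ := (Finset.mem_filter.mp hi).2
          refine Finset.mem_erase.mpr ⟨?_, ?_⟩
          · intro he
            have : (i : ℕ) = k - 1 := by
              have := congrArg (fun (x : Fin k) => (x : ℕ)) he
              simpa [hlast] using this
            have := i.isLt
            omega
          · refine Finset.mem_filter.mpr ⟨Finset.mem_univ _, x, List.mem_of_mem_tail hxt, ?_⟩
            rw [hCsmall _ (by exact i.isLt)]
            exact hxC
        have hcard1 : T'.card ≤ (T.erase last).card := by
          apply Finset.card_le_card_of_injOn f hinj
          intro a _ b _ hab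
          have : (a : ℕ) = (b : ℕ) := by
            have := congrArg (fun (x : Fin k) => (x : ℕ)) hab
            simpa using this
          exact Fin.ext this
        have hcard2 : (T.erase last).card + 1 = T.card :=
          Finset.card_erase_add_one hlastmem
        have htlen : p.tail.length = p.length - 1 := List.length_tail (l := p)
        rw [htlen] at horthT
        omega
      · have h1 : p.length = 1 := by omega
        have h2 : 1 ≤ T.card := Finset.card_pos.mpr ⟨_, hlastmem⟩
        rw [h1]
        omega

end Main

/-- Berge's Conjecture for out-semicomplete digraphs. -/
theorem stmt5 (A : V → V → Prop) (hirr : Irreflexive A) (hout : OutSemicomplete A)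
    (k : ℕ) (hk : 0 < k) (P : Finset (List V)) (hP : KOptimal A k P) :
    ∃ C : Fin k → Finset V, IsPartialKColoring A k C ∧ OrthoPC k C P := by
  classical
  have hopt : OptOn A k Finset.univ P := by
    obtain ⟨⟨hpaths, hdisj, hcover⟩, hmin⟩ := hP
    refine ⟨⟨hpaths, hdisj, fun p hp x hx => Finset.mem_univ x, fun v _ => hcover v⟩, ?_⟩
    intro Q hQ
    exact hmin Q ⟨hQ.1, hQ.2.1, fun v => hQ.2.2.2 v (Finset.mem_univ v)⟩
  obtain ⟨C, hstab, _, hdisjC, horth⟩ := main hirr hout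
    (k * (Fintype.card V + 1) + P.card) k Finset.univ P hk hopt le_rfl
  exact ⟨C, ⟨hstab, hdisjC⟩, horth⟩

end DigraphPaper
end

section
/- Let P be a k-pack of an in-semicomplete digraph D. Then there exists a k-pack Q of D with ||Q|| = ||P||, e(Q) ⊆ e(P), and e(Q) a stable set. -/
open scoped Classical

namespace DigraphPaper

variable {V : Type*} [Fintype V] [DecidableEq V]

lemma dropWhile_eq_cons_neg {α : Type*} (p : α → Bool) :
    ∀ (l : List α) (a : α) (s' : List α), l.dropWhile p = a :: s' → ¬ p a := by
  intro l
  induction l with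
  | nil => intro a s' h; simp at h
  | cons b l ihl =>
    intro a s' h
    by_cases hb : p b
    · rw [List.dropWhile_cons_of_pos hb] at h; exact ihl a s' h
    · rw [List.dropWhile_cons_of_neg hb] at h
      obtain ⟨rfl, _⟩ := List.cons.injEq .. ▸ h
      simpa using hb

lemma merge_lemma_s6 (A : V → V → Prop) (hin : InSemicomplete A) :
    ∀ n (p q : List V), p.length + q.length ≤ n →
    IsPath A p → IsPath A q → (∀ x ∈ p, x ∉ q) →
    ∀ u v, p.getLast? = some u → q.getLast? = some v → A u v →
    ∃ r : List V, IsPath A r ∧ r.toFinset = p.toFinset ∪ q.toFinset ∧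
      (r.getLast? = some u ∨ r.getLast? = some v) := by
  intro n
  induction n with
  | zero =>
    intro p q hlen hp _ _ u v _ _ _
    cases p with
    | nil => exact absurd rfl hp.1
    | cons a l => simp at hlen
  | succ n ih =>
    intro p q hlen hp hq hdisj u v hu hv huv
    classical
    obtain ⟨t, s, ht, hs⟩ : ∃ t s, t = q.takeWhile (fun x => ¬ A u x) ∧
        s = q.dropWhile (fun x => ¬ A u x) := ⟨_, _, rfl, rfl⟩
    have hts : t ++ s = q := by rw [ht, hs]; exact List.takeWhile_append_dropWhile ..
    by_cases hsnil : s = []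
    · exfalso
      have hvq : v ∈ q := List.mem_of_mem_getLast? hv
      have hvt : v ∈ t := by rw [← hts, hsnil, List.append_nil] at hvq; exact hvq
      rw [ht] at hvt
      have := List.mem_takeWhile_imp hvt
      simp only [decide_eq_true_eq] at this; exact this huv
    · obtain ⟨a, s', rfl⟩ : ∃ a s', s = a :: s' := by
        cases s with
        | nil => exact absurd rfl hsnil
        | cons a s' => exact ⟨a, s', rfl⟩
      have hua : A u a := by
        have h2 := dropWhile_eq_cons_neg (fun x => decide (¬ A u x)) q a s' hs.symm
        simpa using h2
      have hqchain : (t ++ a :: s').Chain' A := by rw [hts]; exact hq.2.2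
      obtain ⟨hct, hcs, hlink⟩ := List.isChain_append.1 hqchain
      have hqnodup : (t ++ a :: s').Nodup := by rw [hts]; exact hq.2.1
      obtain ⟨hnt, hns, hdts⟩ := List.nodup_append.1 hqnodup
      have hvlast : (a :: s').getLast? = some v := by
        rw [← hts] at hv
        rwa [List.getLast?_append_of_ne_nil _ (by simp)] at hv
      have hsubq : ∀ x, x ∈ t ∨ x ∈ a :: s' → x ∈ q := by
        intro x hx
        rw [← hts, List.mem_append]; exact hx
      by_cases htnil : t = []
      · refine ⟨p ++ q, ⟨by simp [hp.1], ?_, ?_⟩, by simp, Or.inr ?_⟩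
        · rw [List.nodup_append]
          exact ⟨hp.2.1, hq.2.1, fun x hx y hy hxy => hdisj x hx (hxy ▸ hy)⟩
        · refine List.isChain_append.2 ⟨hp.2.2, hq.2.2, ?_⟩
          intro x hx y hy
          rw [hu, Option.mem_some_iff] at hx
          have hh : q.head? = some a := by rw [← hts, htnil]; simp
          rw [hh, Option.mem_some_iff] at hy
          subst hx; subst hy; exact hua
        · rw [List.getLast?_append_of_ne_nil _ hq.1]; exact hv
      · obtain ⟨w, hw⟩ : ∃ w, t.getLast? = some w :=
          Option.isSome_iff_exists.1 (List.getLast?_isSome.2 htnil)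
        have hwa : A w a := hlink w hw a rfl
        have hwt : w ∈ t := List.mem_of_mem_getLast? hw
        have hnotuw : ¬ A u w := by
          rw [ht] at hwt
          have := List.mem_takeWhile_imp hwt
          simpa using this
        have hune : u ≠ w := by
          intro h
          exact hdisj u (List.mem_of_mem_getLast? hu) (by rw [h]; exact hsubq w (Or.inl hwt))
        have hwu : A w u := by
          rcases hin a u w hua hwa hune with h | h
          · exact absurd h hnotuw
          · exact h
        have hlent : t.length + p.length ≤ n := by
          have h1 : t.length + (a :: s').length = q.length := by
            rw [← hts, List.length_append]
          have h2 : (a :: s').length ≥ 1 := by simp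
          omega
        have hdtp : ∀ x ∈ t, x ∉ p := by
          intro x hx hxp
          exact hdisj x hxp (hsubq x (Or.inl hx))
        obtain ⟨r₁, hr₁path, hr₁fin, hr₁last⟩ :=
          ih t p hlent ⟨htnil, hnt, hct⟩ hp hdtp w u hw hu hwu
        refine ⟨r₁ ++ a :: s', ⟨by simp, ?_, ?_⟩, ?_, Or.inr ?_⟩
        · rw [List.nodup_append]
          refine ⟨hr₁path.2.1, hns, ?_⟩
          intro x hx y hxs hxy; rw [← hxy] at hxs
          have : x ∈ r₁.toFinset := List.mem_toFinset.2 hx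
          rw [hr₁fin, Finset.mem_union] at this
          rcases this with h | h
          · exact hdts _ (List.mem_toFinset.1 h) _ hxs rfl
          · exact hdisj x (List.mem_toFinset.1 h) (hsubq x (Or.inr hxs))
        · refine List.isChain_append.2 ⟨hr₁path.2.2, hcs, ?_⟩
          intro x hx y hy
          rw [List.head?_cons, Option.mem_some_iff] at hy; subst hy
          rcases hr₁last with h | h <;> rw [h, Option.mem_some_iff] at hx <;> subst hx
          · exact hwa
          · exact hua
        · have hqf : q.toFinset = t.toFinset ∪ (a :: s').toFinset := by
            rw [← hts]; simp
          rw [List.toFinset_append, hr₁fin, hqf]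
          ext x; simp only [Finset.mem_union]; tauto
        · rw [List.getLast?_append_of_ne_nil _ (by simp)]; exact hvlast

lemma step_lemma (A : V → V → Prop) (hin : InSemicomplete A) (k : ℕ)
    (P : Finset (List V)) (hP : IsKPack A k P) (p q : List V) (hp : p ∈ P)
    (hq : q ∈ P) (hne : p ≠ q) (u v : V) (hu : p.getLast? = some u)
    (hv : q.getLast? = some v) (huv : A u v) :
    ∃ Q : Finset (List V), IsKPack A k Q ∧ weight Q = weight P ∧
      pends Q ⊆ pends P ∧ Q.card < P.card := by
  classical
  have hpq : ∀ x ∈ p, x ∉ q := fun x hx => hP.2.2 p hp q hq hne x hx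
  obtain ⟨r, hrpath, hrfin, hrlast⟩ :=
    merge_lemma_s6 A hin (p.length + q.length) p q le_rfl (hP.2.1 p hp) (hP.2.1 q hq)
      hpq u v hu hv huv
  set P'' := (P.erase p).erase q with hP''
  have hqmem : q ∈ P.erase p := Finset.mem_erase.2 ⟨fun h => hne h.symm, hq⟩
  have hP''sub : ∀ s ∈ P'', s ∈ P := fun s hs =>
    Finset.mem_of_mem_erase (Finset.mem_of_mem_erase hs)
  have hP''p : ∀ s ∈ P'', s ≠ p := fun s hs =>
    (Finset.mem_erase.1 (Finset.mem_of_mem_erase hs)).1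
  have hP''q : ∀ s ∈ P'', s ≠ q := fun s hs => (Finset.mem_erase.1 hs).1
  -- membership in r
  have hmemr : ∀ x, x ∈ r ↔ (x ∈ p ∨ x ∈ q) := by
    intro x
    rw [← List.mem_toFinset, hrfin]
    simp
  have hrnotmem : r ∉ P'' := by
    intro hr
    obtain ⟨x, hx⟩ := List.exists_mem_of_ne_nil p (hP.2.1 p hp).1
    exact hP.2.2 r (hP''sub r hr) p hp (hP''p r hr) x ((hmemr x).2 (Or.inl hx)) hx
  have hcard'' : P''.card = P.card - 2 := by
    rw [hP'', Finset.card_erase_of_mem hqmem, Finset.card_erase_of_mem hp]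
    omega
  have hcard2 : 2 ≤ P.card := by
    have := Finset.one_lt_card.2 ⟨p, hp, q, hq, hne⟩
    omega
  have hcardQ : (insert r P'').card = P.card - 1 := by
    rw [Finset.card_insert_of_notMem hrnotmem, hcard'']
    omega
  have hrlen : r.length = p.length + q.length := by
    have h1 : r.toFinset.card = r.length := List.toFinset_card_of_nodup hrpath.2.1
    have h2 : p.toFinset.card = p.length := List.toFinset_card_of_nodup (hP.2.1 p hp).2.1
    have h3 : q.toFinset.card = q.length := List.toFinset_card_of_nodup (hP.2.1 q hq).2.1
    have hd : Disjoint p.toFinset q.toFinset := by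
      rw [Finset.disjoint_left]
      intro x hx
      rw [List.mem_toFinset] at *
      exact fun hxq => hpq x hx hxq
    rw [← h1, ← h2, ← h3, hrfin, Finset.card_union_of_disjoint hd]
  refine ⟨insert r P'', ⟨?_, ?_, ?_⟩, ?_, ?_, ?_⟩
  · rw [hcardQ]; exact le_trans (Nat.sub_le _ _) hP.1
  · intro s hs
    rcases Finset.mem_insert.1 hs with rfl | hs
    · exact hrpath
    · exact hP.2.1 s (hP''sub s hs)
  · have key : ∀ s ∈ P'', ∀ x ∈ r, x ∉ s := by
      intro s hs x hxr hxs
      rcases (hmemr x).1 hxr with h | h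
      · exact hP.2.2 p hp s (hP''sub s hs) (fun h' => hP''p s hs h'.symm) x h hxs
      · exact hP.2.2 q hq s (hP''sub s hs) (fun h' => hP''q s hs h'.symm) x h hxs
    intro s hs t ht hst x hxs hxt
    rcases Finset.mem_insert.1 hs with rfl | hs'
    · rcases Finset.mem_insert.1 ht with rfl | ht'
      · exact absurd rfl hst
      · exact key t ht' x hxs hxt
    · rcases Finset.mem_insert.1 ht with rfl | ht'
      · exact key s hs' x hxt hxs
      · exact hP.2.2 s (hP''sub s hs') t (hP''sub t ht') hst x hxs hxt
  · -- weight
    rw [weight, Finset.sum_insert hrnotmem, hrlen]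
    have e1 : ∑ s ∈ P.erase p, s.length + p.length = weight P :=
      Finset.sum_erase_add P _ hp
    have e2 : ∑ s ∈ P'', s.length + q.length = ∑ s ∈ P.erase p, s.length :=
      Finset.sum_erase_add (P.erase p) _ hqmem
    omega
  · intro x hx
    obtain ⟨s, hs, hsl⟩ := hx
    rcases Finset.mem_insert.1 hs with rfl | hs
    · rcases hrlast with h | h <;> rw [h, Option.some_inj] at hsl <;> subst hsl
      · exact ⟨p, hp, hu⟩
      · exact ⟨q, hq, hv⟩
    · exact ⟨s, hP''sub s hs, hsl⟩
  · rw [hcardQ]; omega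

lemma stmt6_aux (A : V → V → Prop) (hin : InSemicomplete A) (k : ℕ) :
    ∀ n (P : Finset (List V)), P.card ≤ n → IsKPack A k P →
    ∃ Q : Finset (List V), IsKPack A k Q ∧ weight Q = weight P ∧
      pends Q ⊆ pends P ∧ DStable A (pends Q) := by
  intro n
  induction n with
  | zero =>
    intro P hcard hP
    have : P = ∅ := Finset.card_eq_zero.1 (Nat.le_zero.1 hcard)
    subst this
    refine ⟨∅, hP, rfl, subset_rfl, ?_⟩
    intro x hx
    obtain ⟨s, hs, _⟩ := hx
    exact absurd hs (Finset.notMem_empty s)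
  | succ n ih =>
    intro P hcard hP
    by_cases hstab : DStable A (pends P)
    · exact ⟨P, hP, rfl, subset_rfl, hstab⟩
    · rw [DStable] at hstab
      push_neg at hstab
      obtain ⟨x, hx, y, hy, hxy, hadj⟩ := hstab
      obtain ⟨p, hp, hpl⟩ := hx
      obtain ⟨q, hq, hql⟩ := hy
      have hne : p ≠ q := by
        intro h; subst h
        rw [hpl] at hql
        exact hxy (Option.some_inj.1 hql)
      have key : ∃ Q : Finset (List V), IsKPack A k Q ∧ weight Q = weight P ∧
          pends Q ⊆ pends P ∧ Q.card < P.card := by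
        rcases hadj with h | h
        · exact step_lemma A hin k P hP p q hp hq hne x y hpl hql h
        · exact step_lemma A hin k P hP q p hq hp (Ne.symm hne) y x hql hpl h
      obtain ⟨Q, hQ, hw, hsub, hlt⟩ := key
      obtain ⟨R, hR, hw', hsub', hstab'⟩ := ih Q (by omega) hQ
      exact ⟨R, hR, hw'.trans hw, hsub'.trans hsub, hstab'⟩

/-- Any k-pack of an in-semicomplete digraph can be converted into one of the
same weight whose endpoint set is stable. -/
theorem stmt6 (A : V → V → Prop) (hirr : Irreflexive A) (hin : InSemicomplete A)
    (k : ℕ) (hk : 0 < k) (P : Finset (List V)) (hP : IsKPack A k P) :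
    ∃ Q : Finset (List V), IsKPack A k Q ∧ weight Q = weight P ∧
      pends Q ⊆ pends P ∧ DStable A (pends Q) :=
  stmt6_aux A hin k P.card P le_rfl hP

end DigraphPaper
end
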